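/- arXiv:2105.12184 — 2 statements merged into one kernel-verified Lean document; each statement's English description precedes it below -/
import Mathlib

section
/- Let G be the structure on finite words over the alphabet Σ of two-element substructures of K, defined by: vertices are nonempty finite words W over Σ such that for all i < j < |W| the structure induced by W_i on {1} equals that induced by W_j on {1}; and for vertices U, V with |U| < |V| satisfying that △(U_i, V_{|U|}, V_i) is defined and embeds into K for all i < |U|, the map 0↦U, 1↦V is an embedding of V_{|U|} into G (and G has no other tuples in its relations). Then every induced cycle in G has a completion to K. -/
/-- A structure in a relational language with unary symbols `L1` and binary symbols `L2`,
on vertex set `V`. -/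
structure Str (L1 L2 V : Type) where
  unary : L1 → V → Prop
  rel : L2 → V → V → Prop

namespace Str

variable {L1 L2 V W : Type}

/-- Two distinct vertices are adjacent if some binary relation holds between them
in either order. -/
def Adj (A : Str L1 L2 V) (x y : V) : Prop :=
  x ≠ y ∧ ∃ r, A.rel r x y ∨ A.rel r y x

/-- The substructure induced on a set of vertices. -/
def Induced (A : Str L1 L2 V) (S : Set V) : Str L1 L2 S where
  unary r x := A.unary r x.1
  rel r x y := A.rel r x.1 y.1

/-- Homomorphism of structures. -/
def IsHom (A : Str L1 L2 V) (B : Str L1 L2 W) (f : V → W) : Prop :=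
  (∀ r x, A.unary r x → B.unary r (f x)) ∧
  (∀ r x y, A.rel r x y → B.rel r (f x) (f y))

/-- Embedding of structures. -/
def IsEmb (A : Str L1 L2 V) (B : Str L1 L2 W) (f : V → W) : Prop :=
  Function.Injective f ∧
  (∀ r x, A.unary r x ↔ B.unary r (f x)) ∧
  (∀ r x y, A.rel r x y ↔ B.rel r (f x) (f y))

/-- A structure is irreducible if any two distinct vertices are adjacent. -/
def Irred (A : Str L1 L2 V) : Prop :=
  ∀ x y : V, x ≠ y → A.Adj x y

/-- A homomorphism-embedding: a homomorphism whose restriction to every irreducible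
substructure is an embedding. -/
def IsHomEmb (A : Str L1 L2 V) (B : Str L1 L2 W) (f : V → W) : Prop :=
  A.IsHom B f ∧
  ∀ S : Set V, (A.Induced S).Irred → (A.Induced S).IsEmb B (fun x => f x.1)

/-- A (strong) completion of `A` to `K`: an injective homomorphism-embedding into the
irreducible structure `K`. -/
def IsCompletion (A : Str L1 L2 V) (K : Str L1 L2 W) (f : V → W) : Prop :=
  K.Irred ∧ Function.Injective f ∧ A.IsHomEmb K f

/-- A cycle: a cyclic sequence of `ℓ ≥ 3` distinct vertices with consecutive vertices
adjacent. -/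
def IsCycle (A : Str L1 L2 V) (ℓ : ℕ) (v : ZMod ℓ → V) : Prop :=
  3 ≤ ℓ ∧ Function.Injective v ∧ ∀ i, A.Adj (v i) (v (i + 1))

/-- An induced cycle: no adjacencies other than the consecutive ones. -/
def IsInducedCycle (A : Str L1 L2 V) (ℓ : ℕ) (v : ZMod ℓ → V) : Prop :=
  A.IsCycle ℓ v ∧
  ∀ i j, i ≠ j → j ≠ i + 1 → i ≠ j + 1 → ¬ A.Adj (v i) (v j)

/-- Every induced cycle of `A` (seen as a substructure) has a completion to `K`. -/
def CycleCompletes (A : Str L1 L2 V) (K : Str L1 L2 W) : Prop :=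
  ∀ (ℓ : ℕ) (v : ZMod ℓ → V), A.IsInducedCycle ℓ v →
    ∃ f : Set.range v → W, (A.Induced (Set.range v)).IsCompletion K f

/-- Every irreducible substructure of `A` of size at most `c` embeds into `K`. -/
def SmallIrredEmbed (A : Str L1 L2 V) (K : Str L1 L2 W) (c : ℕ) : Prop :=
  ∀ S : Set V, S.Finite → S.ncard ≤ c → (A.Induced S).Irred →
    ∃ f : S → W, (A.Induced S).IsEmb K f

end Str

/-- The hypothesis of Theorem 1: every countable structure `A` has a completion to `K`
provided every induced cycle of `A` completes to `K` and every irreducible substructure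
of `A` of size at most 2 embeds into `K`. -/
def CompletionHyp {L1 L2 W : Type} (K : Str L1 L2 W) : Prop :=
  ∀ (V : Type) [Countable V] (A : Str L1 L2 V),
    A.CycleCompletes K → A.SmallIrredEmbed K 2 →
      ∃ f : V → W, A.IsCompletion K f

/-- `D` is the triangle structure `△(A,B,C)`: `0↦0,1↦1` embeds `A`, `0↦1,1↦2` embeds `B`
and `0↦0,1↦2` embeds `C`. -/
def IsTri {L1 L2 : Type} (A B C : Str L1 L2 (Fin 2)) (D : Str L1 L2 (Fin 3)) : Prop :=
  A.IsEmb D ![0, 1] ∧ B.IsEmb D ![1, 2] ∧ C.IsEmb D ![0, 2]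

/-- The alphabet `Σ`: two-element structures embedding into `K`. -/
def Sig {L1 L2 W : Type} (K : Str L1 L2 W) : Type :=
  {A : Str L1 L2 (Fin 2) // ∃ f : Fin 2 → W, A.IsEmb K f}

/-- Condition (A1): all letters of the word induce the same structure on `{1}`. -/
def A1cond {L1 L2 W : Type} {K : Str L1 L2 W} (U : List (Sig K)) : Prop :=
  ∀ (i j : ℕ) (hi : i < U.length) (hj : j < U.length),
    (∀ r, (U.get ⟨i, hi⟩).1.unary r 1 ↔ (U.get ⟨j, hj⟩).1.unary r 1) ∧
    (∀ r, (U.get ⟨i, hi⟩).1.rel r 1 1 ↔ (U.get ⟨j, hj⟩).1.rel r 1 1)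

/-- Vertices of `G`: nonempty finite words over `Σ` satisfying (A1). -/
def GVert {L1 L2 W : Type} (K : Str L1 L2 W) : Type :=
  {U : List (Sig K) // U ≠ [] ∧ A1cond U}

/-- Condition (A2): for all `i < |U|`, the triangle `△(U_i, V_{|U|}, V_i)` is defined and
embeds into `K`. -/
def GTri {L1 L2 W : Type} (K : Str L1 L2 W) (U V : GVert K)
    (h : U.1.length < V.1.length) : Prop :=
  ∀ (i : ℕ) (hi : i < U.1.length),
    ∃ D : Str L1 L2 (Fin 3),
      IsTri (U.1.get ⟨i, hi⟩).1 (V.1.get ⟨U.1.length, h⟩).1 (V.1.get ⟨i, hi.trans h⟩).1 D ∧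
      ∃ f : Fin 3 → W, D.IsEmb K f

/-- The structure `G`: whenever `|U| < |V|` and (A2) holds, the map `0 ↦ U, 1 ↦ V` is an
embedding of the two-element structure `V_{|U|}` into `G`; there are no other tuples. -/
def Gstr {L1 L2 W : Type} (K : Str L1 L2 W) : Str L1 L2 (GVert K) where
  unary r U :=
    (∃ V, ∃ h : U.1.length < V.1.length,
      GTri K U V h ∧ (V.1.get ⟨U.1.length, h⟩).1.unary r 0) ∨
    (∃ V, ∃ h : V.1.length < U.1.length,
      GTri K V U h ∧ (U.1.get ⟨V.1.length, h⟩).1.unary r 1)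
  rel r U V :=
    (∃ h : U.1.length < V.1.length,
      GTri K U V h ∧ (V.1.get ⟨U.1.length, h⟩).1.rel r 0 1) ∨
    (∃ h : V.1.length < U.1.length,
      GTri K V U h ∧ (U.1.get ⟨V.1.length, h⟩).1.rel r 1 0) ∨
    (U = V ∧
      ((∃ Q, ∃ h : U.1.length < Q.1.length,
          GTri K U Q h ∧ (Q.1.get ⟨U.1.length, h⟩).1.rel r 0 0) ∨
       (∃ Q, ∃ h : Q.1.length < U.1.length,
          GTri K Q U h ∧ (U.1.get ⟨Q.1.length, h⟩).1.rel r 1 1)))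

section Helpers
set_option linter.unreachableTactic false
set_option linter.unusedTactic false
namespace Str

variable {L1 L2 V V2 WK : Type}

lemma Adj.symm2 {A : Str L1 L2 V} {x y : V} (h : A.Adj x y) : A.Adj y x :=
  ⟨h.1.symm, h.2.imp fun _ => Or.symm⟩

/-- Exact correspondence of a pair `(a,b)` in `A` with a two-element structure `L`. -/
def PairOn (A : Str L1 L2 V) (L : Str L1 L2 (Fin 2)) (a b : V) : Prop :=
  (∀ r, A.unary r a ↔ L.unary r 0) ∧ (∀ r, A.unary r b ↔ L.unary r 1) ∧
  (∀ r, A.rel r a a ↔ L.rel r 0 0) ∧ (∀ r, A.rel r a b ↔ L.rel r 0 1) ∧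
  (∀ r, A.rel r b a ↔ L.rel r 1 0) ∧ (∀ r, A.rel r b b ↔ L.rel r 1 1)

lemma IsEmb.pairOn {B : Str L1 L2 V} {L : Str L1 L2 (Fin 2)} {e : Fin 2 → V}
    (he : L.IsEmb B e) : B.PairOn L (e 0) (e 1) :=
  ⟨fun r => (he.2.1 r 0).symm, fun r => (he.2.1 r 1).symm,
   fun r => (he.2.2 r 0 0).symm, fun r => (he.2.2 r 0 1).symm,
   fun r => (he.2.2 r 1 0).symm, fun r => (he.2.2 r 1 1).symm⟩

/-- If a pair of `A` is adjacent and a completion carries it, the images realize the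
same two-element structure. -/
lemma completion_pairOn {A : Str L1 L2 V} {K : Str L1 L2 WK} {f : V → WK}
    {L : Str L1 L2 (Fin 2)} {a b : V}
    (hc : A.IsCompletion K f) (hadj : A.Adj a b) (hp : A.PairOn L a b) :
    K.PairOn L (f a) (f b) := by
  have hab : a ≠ b := hadj.1
  have hma : a ∈ ({a, b} : Set V) := Or.inl rfl
  have hmb : b ∈ ({a, b} : Set V) := Or.inr rfl
  have hirr : (A.Induced {a, b}).Irred := by
    rintro ⟨x, hx⟩ ⟨y, hy⟩ hxy
    have hxy' : x ≠ y := fun h => hxy (by simpa using h)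
    have : A.Adj x y := by
      rcases hx with hx | hx <;> rcases hy with hy | hy <;>
        first
          | (simp only [Set.mem_singleton_iff] at hx hy; subst hx; subst hy)
          | (simp only [Set.mem_singleton_iff] at hx; subst hx; subst hy)
          | (simp only [Set.mem_singleton_iff] at hy; subst hx; subst hy)
          | (subst hx; subst hy)
      · exact absurd rfl hxy'
      · exact hadj
      · exact hadj.symm2
      · exact absurd rfl hxy'
    exact ⟨hxy, this.2⟩
  have he := hc.2.2.2 ({a, b} : Set V) hirr
  refine ⟨fun r => ?_, fun r => ?_, fun r => ?_, fun r => ?_, fun r => ?_, fun r => ?_⟩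
  · exact ((he.2.1 r ⟨a, hma⟩).symm).trans (hp.1 r)
  · exact ((he.2.1 r ⟨b, hmb⟩).symm).trans (hp.2.1 r)
  · exact ((he.2.2 r ⟨a, hma⟩ ⟨a, hma⟩).symm).trans (hp.2.2.1 r)
  · exact ((he.2.2 r ⟨a, hma⟩ ⟨b, hmb⟩).symm).trans (hp.2.2.2.1 r)
  · exact ((he.2.2 r ⟨b, hmb⟩ ⟨a, hma⟩).symm).trans (hp.2.2.2.2.1 r)
  · exact ((he.2.2 r ⟨b, hmb⟩ ⟨b, hmb⟩).symm).trans (hp.2.2.2.2.2 r)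

lemma completion_vertexOn {A : Str L1 L2 V} {K : Str L1 L2 WK} {f : V → WK}
    (hc : A.IsCompletion K f) (a : V) :
    (∀ r, A.unary r a ↔ K.unary r (f a)) ∧ (∀ r, A.rel r a a ↔ K.rel r (f a) (f a)) := by
  have hirr : (A.Induced {a}).Irred := by
    rintro ⟨x, hx⟩ ⟨y, hy⟩ hxy
    simp only [Set.mem_singleton_iff] at hx hy
    exact absurd (by simp [hx, hy]) hxy
  have he := hc.2.2.2 ({a} : Set V) hirr
  have hma : a ∈ ({a} : Set V) := rfl
  exact ⟨fun r => he.2.1 r ⟨a, hma⟩, fun r => he.2.2 r ⟨a, hma⟩ ⟨a, hma⟩⟩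

lemma induced_adj {A : Str L1 L2 V} {S : Set V} {a b : ↥S}
    (h : (A.Induced S).Adj a b) : A.Adj a.1 b.1 :=
  ⟨fun hc => h.1 (Subtype.ext hc), h.2⟩

/-- Build a completion of an induced substructure from a map which is exact on
adjacent-or-equal pairs, injective, and a homomorphism. -/
lemma completionOn_of {B : Str L1 L2 V} {K : Str L1 L2 WK} (hK : K.Irred)
    {S : Set V} {g : V → WK}
    (hinj : ∀ x ∈ S, ∀ y ∈ S, g x = g y → x = y)
    (hun : ∀ r, ∀ x ∈ S, B.unary r x ↔ K.unary r (g x))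
    (hloop : ∀ r, ∀ x ∈ S, B.rel r x x ↔ K.rel r (g x) (g x))
    (hrel : ∀ r, ∀ x ∈ S, ∀ y ∈ S, x ≠ y → B.rel r x y → K.rel r (g x) (g y))
    (hadj : ∀ x ∈ S, ∀ y ∈ S, B.Adj x y → ∀ r, B.rel r x y ↔ K.rel r (g x) (g y)) :
    (B.Induced S).IsCompletion K (fun x => g x.1) := by
  refine ⟨hK, ?_, ⟨⟨fun r x hx => (hun r x.1 x.2).mp hx, fun r x y hr => ?_⟩, ?_⟩⟩
  · rintro ⟨x, hx⟩ ⟨y, hy⟩ hxy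
    exact Subtype.ext (hinj x hx y hy hxy)
  · rcases eq_or_ne x y with rfl | hne
    · exact (hloop r x.1 x.2).mp hr
    · have hne' : x.1 ≠ y.1 := fun h => hne (Subtype.ext h)
      exact hrel r x.1 x.2 y.1 y.2 hne' hr
  · intro T hT
    refine ⟨?_, fun r x => ?_, fun r x y => ?_⟩
    · rintro ⟨⟨x, hx⟩, hx'⟩ ⟨⟨y, hy⟩, hy'⟩ hxy
      exact Subtype.ext (Subtype.ext (hinj x hx y hy hxy))
    · exact hun r x.1.1 x.1.2
    · rcases eq_or_ne x y with rfl | hne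
      · exact hloop r x.1.1 x.1.2
      · have hAdj : B.Adj x.1.1 y.1.1 := by
          have := hT x y hne
          exact ⟨fun h => hne (Subtype.ext (Subtype.ext h)), this.2⟩
        exact hadj x.1.1 x.1.2 y.1.1 y.1.2 hAdj r

/-- Build an embedding of an induced substructure from a pointwise exact injective map. -/
lemma embOn_of {B : Str L1 L2 V} {K : Str L1 L2 WK} {S : Set V} {g : V → WK}
    (hinj : ∀ x ∈ S, ∀ y ∈ S, g x = g y → x = y)
    (hun : ∀ r, ∀ x ∈ S, B.unary r x ↔ K.unary r (g x))
    (hrel : ∀ r, ∀ x ∈ S, ∀ y ∈ S, B.rel r x y ↔ K.rel r (g x) (g y)) :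
    (B.Induced S).IsEmb K (fun x => g x.1) := by
  refine ⟨?_, fun r x => hun r x.1 x.2, fun r x y => hrel r x.1 x.2 y.1 y.2⟩
  rintro ⟨x, hx⟩ ⟨y, hy⟩ hxy
  exact Subtype.ext (hinj x hx y hy hxy)

end Str
end Helpers
section GLemmas

set_option linter.unreachableTactic false
set_option linter.unusedTactic false

open Str

variable {L1 L2 WK : Type} {K : Str L1 L2 WK}

/-- Length of a word vertex. -/
abbrev glen (U : GVert K) : ℕ := U.1.length

lemma glen_pos (U : GVert K) : 0 < glen U := List.length_pos_iff.mpr U.2.1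

/-- The `i`-th letter of a word vertex. -/
def ltr (U : GVert K) (i : ℕ) (h : i < glen U) : Str L1 L2 (Fin 2) :=
  (U.1.get ⟨i, h⟩).1

lemma ltr_emb (U : GVert K) (i : ℕ) (h : i < glen U) :
    ∃ e : Fin 2 → WK, (ltr U i h).IsEmb K e := (U.1.get ⟨i, h⟩).2

lemma ltr_cross (hK : K.Irred) (U : GVert K) (i : ℕ) (h : i < glen U) :
    ∃ r, (ltr U i h).rel r 0 1 ∨ (ltr U i h).rel r 1 0 := by
  obtain ⟨e, he⟩ := ltr_emb U i h
  have hne : e 0 ≠ e 1 := fun hc => absurd (he.1 hc) (by decide)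
  obtain ⟨-, r, hr⟩ := hK (e 0) (e 1) hne
  exact ⟨r, hr.imp (fun h => (he.2.2 r 0 1).mpr h) (fun h => (he.2.2 r 1 0).mpr h)⟩

lemma a1_unary (U : GVert K) (i j : ℕ) (hi : i < glen U) (hj : j < glen U) (r : L1) :
    (ltr U i hi).unary r 1 ↔ (ltr U j hj).unary r 1 := (U.2.2 i j hi hj).1 r

lemma a1_rel (U : GVert K) (i j : ℕ) (hi : i < glen U) (hj : j < glen U) (r : L2) :
    (ltr U i hi).rel r 1 1 ↔ (ltr U j hj).rel r 1 1 := (U.2.2 i j hi hj).2 r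

section GTriLemmas

variable {U V : GVert K} {h : glen U < glen V} (hGT : GTri K U V h)

include hGT

lemma gtri_unary0 (i : ℕ) (hi : i < glen U) (r : L1) :
    (ltr V (glen U) h).unary r 0 ↔ (ltr U i hi).unary r 1 := by
  obtain ⟨D, ⟨hA, hB, hC⟩, -⟩ := hGT i hi
  have h1 : (ltr U i hi).unary r 1 ↔ D.unary r 1 := hA.2.1 r 1
  have h2 : (ltr V (glen U) h).unary r 0 ↔ D.unary r 1 := hB.2.1 r 0
  exact h2.trans h1.symm

lemma gtri_loop0 (i : ℕ) (hi : i < glen U) (r : L2) :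
    (ltr V (glen U) h).rel r 0 0 ↔ (ltr U i hi).rel r 1 1 := by
  obtain ⟨D, ⟨hA, hB, hC⟩, -⟩ := hGT i hi
  exact (hB.2.2 r 0 0).trans (hA.2.2 r 1 1).symm

lemma gtri_lev_unary (i : ℕ) (hi : i < glen U) (r : L1) :
    (ltr V i (hi.trans h)).unary r 0 ↔ (ltr U i hi).unary r 0 := by
  obtain ⟨D, ⟨hA, hB, hC⟩, -⟩ := hGT i hi
  exact (hC.2.1 r 0).trans (hA.2.1 r 0).symm

lemma gtri_lev_loop (i : ℕ) (hi : i < glen U) (r : L2) :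
    (ltr V i (hi.trans h)).rel r 0 0 ↔ (ltr U i hi).rel r 0 0 := by
  obtain ⟨D, ⟨hA, hB, hC⟩, -⟩ := hGT i hi
  exact (hC.2.2 r 0 0).trans (hA.2.2 r 0 0).symm

end GTriLemmas

lemma gstr_ne {U V : GVert K} (h : glen U ≠ glen V) : U ≠ V :=
  fun hc => h (by rw [hc])

lemma gstr_rel_fwd {U V : GVert K} (h : glen U < glen V) {r : L2}
    (hr : (Gstr K).rel r U V) : GTri K U V h ∧ (ltr V (glen U) h).rel r 0 1 := by
  rcases hr with ⟨h', hGT, hrel⟩ | ⟨h', -, -⟩ | ⟨heq, -⟩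
  · exact ⟨hGT, hrel⟩
  · exact (Nat.lt_asymm h h').elim
  · exact absurd heq (gstr_ne h.ne)

lemma gstr_rel_fwd' {U V : GVert K} (h : glen U < glen V) {r : L2}
    (hr : (Gstr K).rel r V U) : GTri K U V h ∧ (ltr V (glen U) h).rel r 1 0 := by
  rcases hr with ⟨h', -, -⟩ | ⟨h', hGT, hrel⟩ | ⟨heq, -⟩
  · exact (Nat.lt_asymm h h').elim
  · exact ⟨hGT, hrel⟩
  · exact absurd heq.symm (gstr_ne h.ne)

lemma gstr_rel_bwd {U V : GVert K} (h : glen U < glen V) (hGT : GTri K U V h) {r : L2}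
    (hr : (ltr V (glen U) h).rel r 0 1) : (Gstr K).rel r U V :=
  Or.inl ⟨h, hGT, hr⟩

lemma gstr_rel_bwd' {U V : GVert K} (h : glen U < glen V) (hGT : GTri K U V h) {r : L2}
    (hr : (ltr V (glen U) h).rel r 1 0) : (Gstr K).rel r V U :=
  Or.inr (Or.inl ⟨h, hGT, hr⟩)

lemma gstr_rel_len_ne {U V : GVert K} (hne : U ≠ V) {r : L2}
    (hr : (Gstr K).rel r U V) : glen U ≠ glen V := by
  rcases hr with ⟨h', -, -⟩ | ⟨h', -, -⟩ | ⟨heq, -⟩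
  · exact Nat.ne_of_lt h'
  · exact Nat.ne_of_gt h'
  · exact absurd heq hne

lemma gadj_len_ne {U V : GVert K} (ha : (Gstr K).Adj U V) : glen U ≠ glen V := by
  obtain ⟨hne, r, hr | hr⟩ := ha
  · exact gstr_rel_len_ne hne hr
  · exact (gstr_rel_len_ne hne.symm hr).symm

lemma gadj_gtri {U V : GVert K} (h : glen U < glen V) (ha : (Gstr K).Adj U V) :
    GTri K U V h := by
  obtain ⟨hne, r, hr | hr⟩ := ha
  · exact (gstr_rel_fwd h hr).1
  · exact (gstr_rel_fwd' h hr).1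

/-- `U` has a neighbour certificate. -/
def HasNbr (K : Str L1 L2 WK) (U : GVert K) : Prop :=
  (∃ V h, GTri K U V h) ∨ (∃ V h, GTri K V U h)

lemma gadj_hasNbr {U V : GVert K} (ha : (Gstr K).Adj U V) :
    HasNbr K U ∧ HasNbr K V := by
  rcases Nat.lt_or_ge (glen U) (glen V) with h | h
  · have hGT := gadj_gtri h ha
    exact ⟨Or.inl ⟨V, h, hGT⟩, Or.inr ⟨U, h, hGT⟩⟩
  · have h' : glen V < glen U := lt_of_le_of_ne h (Ne.symm (gadj_len_ne ha))
    have hGT := gadj_gtri h' ha.symm2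
    exact ⟨Or.inr ⟨V, h', hGT⟩, Or.inl ⟨U, h', hGT⟩⟩

lemma gstr_unary_iff {U : GVert K} (hNb : HasNbr K U) (r : L1) :
    (Gstr K).unary r U ↔ (ltr U 0 (glen_pos U)).unary r 1 := by
  constructor
  · rintro (⟨V, h, hGT, hu⟩ | ⟨V, h, hGT, hu⟩)
    · exact (gtri_unary0 hGT 0 (glen_pos U) r).mp hu
    · exact (a1_unary U (glen V) 0 h (glen_pos U) r).mp hu
  · intro hu
    rcases hNb with ⟨V, h, hGT⟩ | ⟨V, h, hGT⟩
    · exact Or.inl ⟨V, h, hGT, (gtri_unary0 hGT 0 (glen_pos U) r).mpr hu⟩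
    · exact Or.inr ⟨V, h, hGT, (a1_unary U (glen V) 0 h (glen_pos U) r).mpr hu⟩

lemma gstr_loop_iff {U : GVert K} (hNb : HasNbr K U) (r : L2) :
    (Gstr K).rel r U U ↔ (ltr U 0 (glen_pos U)).rel r 1 1 := by
  constructor
  · rintro (⟨h, -, -⟩ | ⟨h, -, -⟩ | ⟨-, ⟨V, h, hGT, hu⟩ | ⟨V, h, hGT, hu⟩⟩)
    · exact (lt_irrefl _ h).elim
    · exact (lt_irrefl _ h).elim
    · exact (gtri_loop0 hGT 0 (glen_pos U) r).mp hu
    · exact (a1_rel U (glen V) 0 h (glen_pos U) r).mp hu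
  · intro hu
    rcases hNb with ⟨V, h, hGT⟩ | ⟨V, h, hGT⟩
    · exact Or.inr (Or.inr ⟨rfl, Or.inl ⟨V, h, hGT, (gtri_loop0 hGT 0 (glen_pos U) r).mpr hu⟩⟩)
    · exact Or.inr (Or.inr ⟨rfl, Or.inr ⟨V, h, hGT, (a1_rel U (glen V) 0 h (glen_pos U) r).mpr hu⟩⟩)

/-- The induced structure of `G` on an adjacent pair is exactly the letter. -/
lemma gstr_pairOn {U V : GVert K} (h : glen U < glen V) (hGT : GTri K U V h) :
    (Gstr K).PairOn (ltr V (glen U) h) U V := by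
  have hNbU : HasNbr K U := Or.inl ⟨V, h, hGT⟩
  have hNbV : HasNbr K V := Or.inr ⟨U, h, hGT⟩
  refine ⟨fun r => ?_, fun r => ?_, fun r => ?_, fun r => ?_, fun r => ?_, fun r => ?_⟩
  · exact (gstr_unary_iff hNbU r).trans (gtri_unary0 hGT 0 (glen_pos U) r).symm
  · exact (gstr_unary_iff hNbV r).trans (a1_unary V 0 (glen U) (glen_pos V) h r)
  · exact (gstr_loop_iff hNbU r).trans (gtri_loop0 hGT 0 (glen_pos U) r).symm
  · exact ⟨fun hr => (gstr_rel_fwd h hr).2, gstr_rel_bwd h hGT⟩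
  · exact ⟨fun hr => (gstr_rel_fwd' h hr).2, gstr_rel_bwd' h hGT⟩
  · exact (gstr_loop_iff hNbV r).trans (a1_rel V 0 (glen U) (glen_pos V) h r)

/-- Level-`m` vertex type (unary part). -/
def levU (U : GVert K) (m : ℕ) (r : L1) : Prop :=
  if h : m < glen U then (ltr U m h).unary r 0 else (ltr U 0 (glen_pos U)).unary r 1

/-- Level-`m` vertex type (loop part). -/
def levR (U : GVert K) (m : ℕ) (r : L2) : Prop :=
  if h : m < glen U then (ltr U m h).rel r 0 0 else (ltr U 0 (glen_pos U)).rel r 1 1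

lemma levU_min {U : GVert K} {m : ℕ} (hm : glen U = m) (r : L1) :
    levU U m r ↔ (ltr U 0 (glen_pos U)).unary r 1 := by
  rw [levU, dif_neg (by omega)]

lemma levR_min {U : GVert K} {m : ℕ} (hm : glen U = m) (r : L2) :
    levR U m r ↔ (ltr U 0 (glen_pos U)).rel r 1 1 := by
  rw [levR, dif_neg (by omega)]

lemma levU_big {U : GVert K} {m : ℕ} (hm : m < glen U) (r : L1) :
    levU U m r ↔ (ltr U m hm).unary r 0 := by rw [levU, dif_pos hm]

lemma levR_big {U : GVert K} {m : ℕ} (hm : m < glen U) (r : L2) :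
    levR U m r ↔ (ltr U m hm).rel r 0 0 := by rw [levR, dif_pos hm]

lemma lev_step {m : ℕ} {U V : GVert K} (hU : m ≤ glen U) (hV : m ≤ glen V)
    (h : glen U < glen V) (hGT : GTri K U V h) :
    (∀ r, levU U m r ↔ levU V m r) ∧ (∀ r, levR U m r ↔ levR V m r) := by
  have hV' : m < glen V := lt_of_le_of_lt hU h
  rcases lt_or_eq_of_le hU with hU' | hU'
  · constructor
    · intro r
      rw [levU_big hU', levU_big hV']
      exact (gtri_lev_unary hGT m hU' r).symm
    · intro r
      rw [levR_big hU', levR_big hV']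
      exact (gtri_lev_loop hGT m hU' r).symm
  · -- m = glen U
    constructor
    · intro r
      rw [levU_min hU'.symm, levU_big hV']
      have := gtri_unary0 hGT 0 (glen_pos U) r
      -- ltr V (glen U) h = ltr V m hV' since m = glen U
      rw [show (ltr V m hV') = (ltr V (glen U) h) by subst hU'; rfl]
      exact this.symm
    · intro r
      rw [levR_min hU'.symm, levR_big hV']
      have := gtri_loop0 hGT 0 (glen_pos U) r
      rw [show (ltr V m hV') = (ltr V (glen U) h) by subst hU'; rfl]
      exact this.symm

lemma lev_adj_step {m : ℕ} {U V : GVert K} (hU : m ≤ glen U) (hV : m ≤ glen V)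
    (ha : (Gstr K).Adj U V) :
    (∀ r, levU U m r ↔ levU V m r) ∧ (∀ r, levR U m r ↔ levR V m r) := by
  rcases Nat.lt_or_ge (glen U) (glen V) with h | hge
  · exact lev_step hU hV h (gadj_gtri h ha)
  · have h' : glen V < glen U := lt_of_le_of_ne hge (Ne.symm (gadj_len_ne ha))
    have := lev_step hV hU h' (gadj_gtri h' ha.symm2)
    exact ⟨fun r => (this.1 r).symm, fun r => (this.2 r).symm⟩

end GLemmas
section ZModHelpers

lemma zmod_cast_inj {n a b : ℕ} (ha : a < n) (hb : b < n) (h : (a : ZMod n) = b) : a = b := by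
  have h1 := ZMod.val_cast_of_lt ha
  have h2 := ZMod.val_cast_of_lt hb
  rw [h] at h1; omega

lemma zmod_shift_eq_iff {n a b : ℕ} (ha : a < n) (hb : b < n) (t : ZMod n) :
    t + (a : ZMod n) = t + (b : ZMod n) ↔ a = b := by
  constructor
  · intro h
    exact zmod_cast_inj ha hb (by exact add_left_cancel h)
  · rintro rfl; rfl

lemma zmod_exists_shift {n : ℕ} [NeZero n] (k t : ZMod n) :
    ∃ c : ℕ, c < n ∧ t = k + (c : ZMod n) := by
  refine ⟨(t - k).val, (t - k).val_lt, ?_⟩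
  rw [ZMod.natCast_rightInverse (t - k)]
  ring

lemma zmod_const {n : ℕ} [NeZero n] (Q : ZMod n → Prop)
    (h : ∀ i, Q i ↔ Q (i + 1)) : ∀ i j, Q i ↔ Q j := by
  have aux : ∀ (c : ℕ) (i : ZMod n), Q i ↔ Q (i + (c : ZMod n)) := by
    intro c
    induction c with
    | zero => intro i; simp
    | succ c ih =>
      intro i
      have : ((c + 1 : ℕ) : ZMod n) = (c : ZMod n) + 1 := by push_cast; ring
      rw [this, ← add_assoc]
      exact (ih i).trans (h (i + (c : ZMod n)))
  intro i j
  obtain ⟨c, -, rfl⟩ := zmod_exists_shift i j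
  exact aux c i

lemma zmod_two_ne_zero {n : ℕ} (h3 : 3 ≤ n) : (2 : ZMod n) ≠ 0 := by
  intro hc
  have : ((2 : ℕ) : ZMod n) = ((0 : ℕ) : ZMod n) := by push_cast; exact hc
  have := zmod_cast_inj (by omega) (by omega) this
  omega

lemma zmod_succ_surj {n l : ℕ} (h3 : 3 ≤ n) (hl : 0 < l)
    (ι : ZMod n → ZMod l) (hinj : Function.Injective ι)
    (hstep : ∀ t, ι (t + 1) = ι t + 1) : Function.Surjective ι := by
  haveI : NeZero n := ⟨by omega⟩
  haveI : NeZero l := ⟨by omega⟩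
  have aux : ∀ (c : ℕ), ι ((c : ZMod n)) = ι 0 + (c : ZMod l) := by
    intro c
    induction c with
    | zero => simp
    | succ c ih =>
      have e1 : ((c + 1 : ℕ) : ZMod n) = (c : ZMod n) + 1 := by push_cast; ring
      have e2 : ((c + 1 : ℕ) : ZMod l) = (c : ZMod l) + 1 := by push_cast; ring
      rw [e1, e2, hstep, ih, add_assoc]
  -- l divides n
  have hn0 : ι ((n : ZMod n)) = ι 0 + (n : ZMod l) := aux n
  rw [ZMod.natCast_self] at hn0
  have hcast : ((n : ℕ) : ZMod l) = 0 := by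
    have := hn0
    rwa [left_eq_add] at this
  have hdvd : l ∣ n := (ZMod.natCast_eq_zero_iff n l).mp hcast
  have hle : n ≤ l := by
    have h1 : Nat.card (ZMod n) ≤ Nat.card (ZMod l) := Nat.card_le_card_of_injective ι hinj
    simpa [Nat.card_eq_fintype_card, ZMod.card] using h1
  have : l = n := le_antisymm (Nat.le_of_dvd (by omega) hdvd) hle
  subst this
  exact Finite.surjective_of_injective hinj

lemma zmod_cases3 (t : ZMod 3) : t = 0 ∨ t = 1 ∨ t = 2 := by revert t; decide

lemma zmod_cases4 (t : ZMod 4) : t = 0 ∨ t = 1 ∨ t = 2 ∨ t = 3 := by revert t; decide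

/-- Consecutive-or-equal classification from an induced cycle. -/
lemma cyc_consec {L1 L2 V : Type} {A : Str L1 L2 V} {n : ℕ} {w : ZMod n → V}
    (hIC : A.IsInducedCycle n w) {i j : ZMod n} (hadj : A.Adj (w i) (w j)) :
    j = i + 1 ∨ i = j + 1 := by
  by_contra hc
  push_neg at hc
  have hij : i ≠ j := fun h => hadj.1 (by rw [h])
  exact hIC.2 i j hij hc.1 hc.2 hadj

end ZModHelpers
section Path3
set_option linter.unusedTactic false
open Str

variable {L1 L2 WK : Type}

lemma pairOn_cross {K : Str L1 L2 WK} {L : Str L1 L2 (Fin 2)} {c q : WK}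
    (hK : K.Irred) (hne : c ≠ q) (hp : K.PairOn L c q) :
    ∃ r, L.rel r 0 1 ∨ L.rel r 1 0 := by
  obtain ⟨-, r, hr⟩ := hK c q hne
  exact ⟨r, hr.imp (hp.2.2.2.1 r).mp (hp.2.2.2.2.1 r).mp⟩

/-- The path structure `1 — 0 — 2` glued from `La` (on `(0,1)`) and `Lb` (on `(0,2)`). -/
def path3Str (La Lb : Str L1 L2 (Fin 2)) : Str L1 L2 (Fin 3) where
  unary r x := (x = 0 ∧ La.unary r 0) ∨ (x = 1 ∧ La.unary r 1) ∨ (x = 2 ∧ Lb.unary r 1)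
  rel r x y :=
    (x = 0 ∧ y = 0 ∧ La.rel r 0 0) ∨ (x = 0 ∧ y = 1 ∧ La.rel r 0 1) ∨
    (x = 1 ∧ y = 0 ∧ La.rel r 1 0) ∨ (x = 1 ∧ y = 1 ∧ La.rel r 1 1) ∨
    (x = 0 ∧ y = 2 ∧ Lb.rel r 0 1) ∨ (x = 2 ∧ y = 0 ∧ Lb.rel r 1 0) ∨
    (x = 2 ∧ y = 2 ∧ Lb.rel r 1 1)

lemma zmod3_consec (i j : ZMod 3) (h : i ≠ j) : j = i + 1 ∨ i = j + 1 := by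
  revert i j; decide

/-- Gluing two letters along their `0`-vertex inside `K`. -/
lemma path3 {K : Str L1 L2 WK} [Countable WK] (hK : K.Irred) (hyp : CompletionHyp K)
    (La Lb : Str L1 L2 (Fin 2))
    (ea : ∃ e : Fin 2 → WK, La.IsEmb K e) (eb : ∃ e : Fin 2 → WK, Lb.IsEmb K e)
    (h0u : ∀ r, La.unary r 0 ↔ Lb.unary r 0) (h0l : ∀ r, La.rel r 0 0 ↔ Lb.rel r 0 0)
    (hca : ∃ r, La.rel r 0 1 ∨ La.rel r 1 0) (hcb : ∃ r, Lb.rel r 0 1 ∨ Lb.rel r 1 0) :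
    ∃ c q s : WK, c ≠ q ∧ c ≠ s ∧ q ≠ s ∧ K.PairOn La c q ∧ K.PairOn Lb c s := by
  classical
  set P : Str L1 L2 (Fin 3) := path3Str La Lb with hP
  have fin3cases : ∀ x : Fin 3, x = 0 ∨ x = 1 ∨ x = 2 := by decide
  have f12 : (1 : Fin 3) ≠ 2 := by decide
  have hrel12 : ∀ r, ¬ (P.rel r 1 2 ∨ P.rel r 2 1) := by
    rintro r (hr | hr) <;> simp [hP, path3Str] at hr
  have hcc : P.CycleCompletes K := by
    intro n w hw
    exfalso
    haveI : NeZero n := ⟨by have := hw.1.1; omega⟩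
    have hn3 : n = 3 := by
      have hle : n ≤ 3 := by
        have := Fintype.card_le_of_injective w hw.1.2.1
        simpa [ZMod.card] using this
      have := hw.1.1; omega
    subst hn3
    have hsurj : Function.Surjective w :=
      ((Fintype.bijective_iff_injective_and_card w).mpr ⟨hw.1.2.1, by simp [ZMod.card]⟩).2
    obtain ⟨i1, hi1⟩ := hsurj 1
    obtain ⟨i2, hi2⟩ := hsurj 2
    have hne : i1 ≠ i2 := by rintro rfl; exact f12 (hi1.symm.trans hi2)
    rcases zmod3_consec i1 i2 hne with h | h
    · have := hw.1.2.2 i1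
      rw [← h, hi1, hi2] at this
      exact hrel12 this.2.choose this.2.choose_spec
    · have := hw.1.2.2 i2
      rw [← h, hi1, hi2] at this
      obtain ⟨r, hr⟩ := this.2
      exact hrel12 r hr.symm
  have hsmall : P.SmallIrredEmbed K 2 := by
    intro S hfin hcard hirr
    obtain ⟨e1, he1⟩ := ea
    obtain ⟨e2, he2⟩ := eb
    by_cases h2S : (2 : Fin 3) ∈ S
    · have h1S : (1 : Fin 3) ∉ S := by
        intro h1S
        have := hirr ⟨1, h1S⟩ ⟨2, h2S⟩ (fun hc => f12 (congrArg Subtype.val hc))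
        exact hrel12 this.2.choose this.2.choose_spec
      have hmem : ∀ x : Fin 3, x ∈ S → x = 0 ∨ x = 2 := by
        intro x hx
        rcases fin3cases x with rfl | rfl | rfl
        · exact Or.inl rfl
        · exact absurd hx h1S
        · exact Or.inr rfl
      exact ⟨_, embOn_of (B := P) (K := K) (S := S) (g := ![e2 0, e2 1, e2 1])
        (by intro x hx y hy hxy
            rcases hmem x hx with rfl | rfl <;> rcases hmem y hy with rfl | rfl <;>
              simp_all <;> exact absurd (he2.1 hxy) (by decide))
        (by intro r x hx
            rcases hmem x hx with rfl | rfl <;>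
              simp [hP, path3Str, ← he2.2.1 r 0, ← he2.2.1 r 1, h0u r])
        (by intro r x hx y hy
            rcases hmem x hx with rfl | rfl <;> rcases hmem y hy with rfl | rfl <;>
              simp [hP, path3Str, ← he2.2.2 r 0 0, ← he2.2.2 r 0 1, ← he2.2.2 r 1 0,
                ← he2.2.2 r 1 1, h0l r])⟩
    · have hmem : ∀ x : Fin 3, x ∈ S → x = 0 ∨ x = 1 := by
        intro x hx
        rcases fin3cases x with rfl | rfl | rfl
        · exact Or.inl rfl
        · exact Or.inr rfl
        · exact absurd hx h2S
      exact ⟨_, embOn_of (B := P) (K := K) (S := S) (g := ![e1 0, e1 1, e1 1])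
        (by intro x hx y hy hxy
            rcases hmem x hx with rfl | rfl <;> rcases hmem y hy with rfl | rfl <;>
              simp_all <;> exact absurd (he1.1 hxy) (by decide))
        (by intro r x hx
            rcases hmem x hx with rfl | rfl <;>
              simp [hP, path3Str, ← he1.2.1 r 0, ← he1.2.1 r 1])
        (by intro r x hx y hy
            rcases hmem x hx with rfl | rfl <;> rcases hmem y hy with rfl | rfl <;>
              simp [hP, path3Str, ← he1.2.2 r 0 0, ← he1.2.2 r 0 1, ← he1.2.2 r 1 0,
                ← he1.2.2 r 1 1])⟩
  obtain ⟨f, hf⟩ := hyp (Fin 3) P hcc hsmall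
  have hadj01 : P.Adj 0 1 := by
    refine ⟨by decide, ?_⟩
    obtain ⟨r, hr | hr⟩ := hca
    · exact ⟨r, Or.inl (by simp [hP, path3Str, hr])⟩
    · exact ⟨r, Or.inr (by simp [hP, path3Str, hr])⟩
  have hadj02 : P.Adj 0 2 := by
    refine ⟨by decide, ?_⟩
    obtain ⟨r, hr | hr⟩ := hcb
    · exact ⟨r, Or.inl (by simp [hP, path3Str, hr])⟩
    · exact ⟨r, Or.inr (by simp [hP, path3Str, hr])⟩
  have hpa : P.PairOn La 0 1 := by
    refine ⟨fun r => ?_, fun r => ?_, fun r => ?_, fun r => ?_, fun r => ?_, fun r => ?_⟩ <;>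
      simp [hP, path3Str]
  have hpb : P.PairOn Lb 0 2 := by
    refine ⟨fun r => ?_, fun r => ?_, fun r => ?_, fun r => ?_, fun r => ?_, fun r => ?_⟩
    · simp [hP, path3Str, h0u r]
    · simp [hP, path3Str]
    · simp [hP, path3Str, h0l r]
    · simp [hP, path3Str]
    · simp [hP, path3Str]
    · simp [hP, path3Str]
  refine ⟨f 0, f 1, f 2, fun h => absurd (hf.2.1 h) (by decide),
    fun h => absurd (hf.2.1 h) (by decide), fun h => absurd (hf.2.1 h) (by decide),
    completion_pairOn hf hadj01 hpa, completion_pairOn hf hadj02 hpb⟩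

end Path3
section Twin
set_option linter.unusedTactic false
open Str

variable {L1 L2 WK : Type}

/-- `K` together with one extra point doubling `c` over the base points `q`, `s`. -/
def twinStr (K : Str L1 L2 WK) (F1 F2 : Str L1 L2 (Fin 2)) (q s : WK) :
    Str L1 L2 (WK ⊕ Unit) where
  unary r x := Sum.elim (K.unary r) (fun _ => F1.unary r 0) x
  rel r x y :=
    Sum.elim
      (fun u => Sum.elim (fun u' => K.rel r u u')
        (fun _ => (u = q ∧ F1.rel r 1 0) ∨ (u = s ∧ F2.rel r 1 0)) y)
      (fun _ => Sum.elim (fun u' => (u' = q ∧ F1.rel r 0 1) ∨ (u' = s ∧ F2.rel r 0 1))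
        (fun _ => F1.rel r 0 0) y) x

/-- Doubling a point over two base points inside `K`. -/
lemma twin {K : Str L1 L2 WK} [Countable WK] (hK : K.Irred) (hyp : CompletionHyp K)
    (F1 F2 : Str L1 L2 (Fin 2)) (c q s : WK)
    (hcq : c ≠ q) (hcs : c ≠ s) (hqs : q ≠ s)
    (h1 : K.PairOn F1 c q) (h2 : K.PairOn F2 c s) :
    ∃ p a z b : WK, p ≠ a ∧ p ≠ z ∧ p ≠ b ∧ a ≠ z ∧ a ≠ b ∧ z ≠ b ∧
      K.PairOn F1 p a ∧ K.PairOn F1 z a ∧ K.PairOn F2 p b ∧ K.PairOn F2 z b := by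
  classical
  set T : Str L1 L2 (WK ⊕ Unit) := twinStr K F1 F2 q s with hT
  have cross1 : ∃ r, F1.rel r 0 1 ∨ F1.rel r 1 0 := pairOn_cross hK hcq h1
  have cross2 : ∃ r, F2.rel r 0 1 ∨ F2.rel r 1 0 := pairOn_cross hK hcs h2
  have gex_x : ∀ r, T.unary r (Sum.inr ()) ↔ K.unary r c := fun r => (h1.1 r).symm
  have gloop_x : ∀ r, T.rel r (Sum.inr ()) (Sum.inr ()) ↔ K.rel r c c :=
    fun r => (h1.2.2.1 r).symm
  have grel_xq : ∀ r, T.rel r (Sum.inr ()) (Sum.inl q) ↔ K.rel r c q := by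
    intro r
    constructor
    · rintro (⟨-, h⟩ | ⟨hq', -⟩)
      · exact (h1.2.2.2.1 r).mpr h
      · exact absurd hq' hqs
    · intro h; exact Or.inl ⟨rfl, (h1.2.2.2.1 r).mp h⟩
  have grel_qx : ∀ r, T.rel r (Sum.inl q) (Sum.inr ()) ↔ K.rel r q c := by
    intro r
    constructor
    · rintro (⟨-, h⟩ | ⟨hq', -⟩)
      · exact (h1.2.2.2.2.1 r).mpr h
      · exact absurd hq' hqs
    · intro h; exact Or.inl ⟨rfl, (h1.2.2.2.2.1 r).mp h⟩
  have grel_xs : ∀ r, T.rel r (Sum.inr ()) (Sum.inl s) ↔ K.rel r c s := by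
    intro r
    constructor
    · rintro (⟨hq', -⟩ | ⟨-, h⟩)
      · exact absurd hq' hqs.symm
      · exact (h2.2.2.2.1 r).mpr h
    · intro h; exact Or.inr ⟨rfl, (h2.2.2.2.1 r).mp h⟩
  have grel_sx : ∀ r, T.rel r (Sum.inl s) (Sum.inr ()) ↔ K.rel r s c := by
    intro r
    constructor
    · rintro (⟨hq', -⟩ | ⟨-, h⟩)
      · exact absurd hq' hqs.symm
      · exact (h2.2.2.2.2.1 r).mpr h
    · intro h; exact Or.inr ⟨rfl, (h2.2.2.2.2.1 r).mp h⟩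
  have hadj_mem : ∀ u : WK, T.Adj (Sum.inr ()) (Sum.inl u) → u = q ∨ u = s := by
    rintro u ⟨-, r, hr | hr⟩
    · exact hr.imp (fun h => h.1) (fun h => h.1)
    · exact hr.imp (fun h => h.1) (fun h => h.1)
  have hcc : T.CycleCompletes K := by
    intro n w hw
    haveI : NeZero n := ⟨by have := hw.1.1; omega⟩
    by_cases hxin : ∃ t0, w t0 = Sum.inr ()
    · obtain ⟨t0, ht0⟩ := hxin
      have hinlmem : ∀ t, t ≠ t0 → ∃ u, w t = Sum.inl u := by
        intro t ht
        rcases h' : w t with u | t'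
        · exact ⟨u, rfl⟩
        · exact absurd (hw.1.2.1 (h'.trans (by cases t'; exact ht0.symm))) ht
      have lit_ne : ∀ a b : ℕ, a < n → b < n → a ≠ b →
          ((a : ℕ) : ZMod n) ≠ ((b : ℕ) : ZMod n) :=
        fun a b ha hb hab h => hab (zmod_cast_inj ha hb h)
      have hn3 : n = 3 := by
        by_contra hne3
        have hn4 : 4 ≤ n := by have := hw.1.1; omega
        have hne10 : t0 + (1 : ZMod n) ≠ t0 := by
          rw [Ne, add_eq_left, show (1 : ZMod n) = ((1:ℕ) : ZMod n) by push_cast; ring,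
            show (0 : ZMod n) = ((0:ℕ) : ZMod n) by push_cast; ring]
          exact lit_ne 1 0 (by omega) (by omega) (by omega)
        have hne30 : t0 + (3 : ZMod n) ≠ t0 := by
          rw [Ne, add_eq_left, show (3 : ZMod n) = ((3:ℕ) : ZMod n) by push_cast; ring,
            show (0 : ZMod n) = ((0:ℕ) : ZMod n) by push_cast; ring]
          exact lit_ne 3 0 (by omega) (by omega) (by omega)
        have hne13 : t0 + (1 : ZMod n) ≠ t0 + (3 : ZMod n) := by
          rw [Ne, add_right_inj, show (1 : ZMod n) = ((1:ℕ) : ZMod n) by push_cast; ring,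
            show (3 : ZMod n) = ((3:ℕ) : ZMod n) by push_cast; ring]
          exact lit_ne 1 3 (by omega) (by omega) (by omega)
        obtain ⟨u1, hu1⟩ := hinlmem (t0 + 1) hne10
        obtain ⟨u3, hu3⟩ := hinlmem (t0 + 3) hne30
        have huu : u1 ≠ u3 := by
          intro h
          exact hne13 (hw.1.2.1 (by rw [hu1, hu3, h]))
        have hadj : T.Adj (w (t0 + 1)) (w (t0 + 3)) := by
          rw [hu1, hu3]
          obtain ⟨-, r, hr⟩ := hK u1 u3 huu
          exact ⟨fun hc => huu (Sum.inl.inj hc), r, hr⟩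
        rcases cyc_consec hw hadj with h | h
        · rw [add_assoc] at h
          rw [add_right_inj] at h
          have : ((3:ℕ) : ZMod n) = ((2:ℕ) : ZMod n) := by push_cast; rw [h]; ring
          exact lit_ne 3 2 (by omega) (by omega) (by omega) this
        · rw [add_assoc] at h
          rw [add_right_inj] at h
          have : ((1:ℕ) : ZMod n) = ((4:ℕ) : ZMod n) := by push_cast; rw [h]; ring
          rw [ZMod.natCast_eq_natCast_iff] at this
          have hdvd : n ∣ 3 := (Nat.modEq_iff_dvd' (by omega)).mp this
          exact absurd (Nat.le_of_dvd (by omega) hdvd) (by omega)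
      subst hn3
      have z3a : ∀ a : ZMod 3, a + 1 ≠ a := by decide
      have z3b : ∀ a : ZMod 3, a + 2 ≠ a := by decide
      have z3c : ∀ a : ZMod 3, a + 1 ≠ a + 2 := by decide
      have z3d : ∀ a : ZMod 3, a + 2 + 1 = a := by decide
      have z3e : ∀ a b : ZMod 3, b = a ∨ b = a + 1 ∨ b = a + 2 := by decide
      have hne10 : t0 + 1 ≠ t0 := z3a t0
      have hne20 : t0 + 2 ≠ t0 := z3b t0
      have hne12 : t0 + 1 ≠ t0 + 2 := z3c t0
      obtain ⟨u1, hu1⟩ := hinlmem (t0 + 1) hne10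
      obtain ⟨u2, hu2⟩ := hinlmem (t0 + 2) hne20
      have huu : u1 ≠ u2 := fun h => hne12 (hw.1.2.1 (by rw [hu1, hu2, h]))
      have hA1 : T.Adj (Sum.inr ()) (Sum.inl u1) := by
        have := hw.1.2.2 t0
        rwa [ht0, hu1] at this
      have hA2 : T.Adj (Sum.inr ()) (Sum.inl u2) := by
        have := hw.1.2.2 (t0 + 2)
        rw [hu2, z3d t0, ht0] at this
        exact this.symm2
      have hu1m := hadj_mem u1 hA1
      have hu2m := hadj_mem u2 hA2
      have hmem : ∀ x ∈ Set.range w, x = Sum.inr () ∨ x = Sum.inl u1 ∨ x = Sum.inl u2 := by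
        rintro x ⟨t, rfl⟩
        rcases z3e t0 t with rfl | rfl | rfl
        · exact Or.inl ht0
        · exact Or.inr (Or.inl hu1)
        · exact Or.inr (Or.inr hu2)
      have huc1 : u1 ≠ c := by rcases hu1m with rfl | rfl; exacts [hcq.symm, hcs.symm]
      have huc2 : u2 ≠ c := by rcases hu2m with rfl | rfl; exacts [hcq.symm, hcs.symm]
      have grel_xu : ∀ u, (u = q ∨ u = s) → ∀ r,
          (T.rel r (Sum.inr ()) (Sum.inl u) ↔ K.rel r c u) ∧
          (T.rel r (Sum.inl u) (Sum.inr ()) ↔ K.rel r u c) := by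
        rintro u (rfl | rfl) r
        · exact ⟨grel_xq r, grel_qx r⟩
        · exact ⟨grel_xs r, grel_sx r⟩
      refine ⟨_, completionOn_of hK (S := Set.range w) (g := Sum.elim id fun _ => c)
        ?_ ?_ ?_ ?_ ?_⟩
      · intro x hx y hy hxy
        rcases hmem x hx with rfl | rfl | rfl <;> rcases hmem y hy with rfl | rfl | rfl
        · rfl
        · exact absurd (show c = u1 from hxy).symm huc1
        · exact absurd (show c = u2 from hxy).symm huc2
        · exact absurd (show u1 = c from hxy) huc1
        · rfl
        · rw [show u1 = u2 from hxy]
        · exact absurd (show u2 = c from hxy) huc2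
        · rw [show u2 = u1 from hxy]
        · rfl
      · intro r x hx
        rcases hmem x hx with rfl | rfl | rfl
        · exact gex_x r
        · exact Iff.rfl
        · exact Iff.rfl
      · intro r x hx
        rcases hmem x hx with rfl | rfl | rfl
        · exact gloop_x r
        · exact Iff.rfl
        · exact Iff.rfl
      · intro r x hx y hy hne hr
        rcases hmem x hx with rfl | rfl | rfl <;> rcases hmem y hy with rfl | rfl | rfl
        · exact absurd rfl hne
        · exact ((grel_xu u1 hu1m r).1).mp hr
        · exact ((grel_xu u2 hu2m r).1).mp hr
        · exact ((grel_xu u1 hu1m r).2).mp hr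
        · exact absurd rfl hne
        · exact hr
        · exact ((grel_xu u2 hu2m r).2).mp hr
        · exact hr
        · exact absurd rfl hne
      · intro x hx y hy hadj r
        rcases hmem x hx with rfl | rfl | rfl <;> rcases hmem y hy with rfl | rfl | rfl
        · exact gloop_x r
        · exact (grel_xu u1 hu1m r).1
        · exact (grel_xu u2 hu2m r).1
        · exact (grel_xu u1 hu1m r).2
        · exact Iff.rfl
        · exact Iff.rfl
        · exact (grel_xu u2 hu2m r).2
        · exact Iff.rfl
        · exact Iff.rfl
    · push_neg at hxin
      have hinl : ∀ x ∈ Set.range w, ∃ u, x = Sum.inl u := by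
        rintro x ⟨t, rfl⟩
        rcases h' : w t with u | t'
        · exact ⟨u, rfl⟩
        · exact absurd (by rw [h']) (hxin t)
      refine ⟨_, completionOn_of hK (S := Set.range w) (g := Sum.elim id fun _ => c)
        ?_ ?_ ?_ ?_ ?_⟩
      · intro x hx y hy hxy
        obtain ⟨u, rfl⟩ := hinl x hx
        obtain ⟨u', rfl⟩ := hinl y hy
        simp only [Sum.elim_inl, id] at hxy
        rw [hxy]
      · intro r x hx
        obtain ⟨u, rfl⟩ := hinl x hx
        exact Iff.rfl
      · intro r x hx
        obtain ⟨u, rfl⟩ := hinl x hx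
        exact Iff.rfl
      · intro r x hx y hy hne hr
        obtain ⟨u, rfl⟩ := hinl x hx
        obtain ⟨u', rfl⟩ := hinl y hy
        exact hr
      · intro x hx y hy hadj r
        obtain ⟨u, rfl⟩ := hinl x hx
        obtain ⟨u', rfl⟩ := hinl y hy
        exact Iff.rfl
  have hsmall : T.SmallIrredEmbed K 2 := by
    intro S hfin hcard hirr
    have hmem : ∀ u, Sum.inl u ∈ S → Sum.inr () ∈ S → u = q ∨ u = s := by
      intro u hu hx
      have := hirr ⟨_, hx⟩ ⟨_, hu⟩
        (fun hc => nomatch congrArg Subtype.val hc)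
      exact hadj_mem u (induced_adj this)
    refine ⟨_, embOn_of (B := T) (K := K) (S := S) (g := Sum.elim id fun _ => c) ?_ ?_ ?_⟩
    · intro x hx y hy hxy
      rcases x with u | tx <;> rcases y with u' | ty
      · simp only [Sum.elim_inl, id] at hxy; rw [hxy]
      · simp only [Sum.elim_inl, Sum.elim_inr, id] at hxy
        cases ty
        rcases hmem u hx hy with rfl | rfl
        · exact absurd hxy.symm hcq
        · exact absurd hxy.symm hcs
      · simp only [Sum.elim_inl, Sum.elim_inr, id] at hxy
        cases tx
        rcases hmem u' hy hx with rfl | rfl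
        · exact absurd hxy hcq
        · exact absurd hxy hcs
      · cases tx; cases ty; rfl
    · intro r x hx
      rcases x with u | tx
      · exact Iff.rfl
      · cases tx; exact gex_x r
    · intro r x hx y hy
      rcases x with u | tx <;> rcases y with u' | ty
      · exact Iff.rfl
      · cases ty
        rcases hmem u hx hy with rfl | rfl
        · exact grel_qx r
        · exact grel_sx r
      · cases tx
        rcases hmem u' hy hx with rfl | rfl
        · exact grel_xq r
        · exact grel_xs r
      · cases tx; cases ty; exact gloop_x r
  obtain ⟨F, hF⟩ := hyp (WK ⊕ Unit) T hcc hsmall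
  have hTcq : T.Adj (Sum.inl c) (Sum.inl q) := by
    obtain ⟨-, r, hr⟩ := hK c q hcq
    exact ⟨fun hc => hcq (Sum.inl.inj hc), r, hr⟩
  have hTcs : T.Adj (Sum.inl c) (Sum.inl s) := by
    obtain ⟨-, r, hr⟩ := hK c s hcs
    exact ⟨fun hc => hcs (Sum.inl.inj hc), r, hr⟩
  have hTxq : T.Adj (Sum.inr ()) (Sum.inl q) := by
    refine ⟨fun hc => (nomatch hc), ?_⟩
    obtain ⟨r, hr | hr⟩ := cross1
    · exact ⟨r, Or.inl (Or.inl ⟨rfl, hr⟩)⟩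
    · exact ⟨r, Or.inr (Or.inl ⟨rfl, hr⟩)⟩
  have hTxs : T.Adj (Sum.inr ()) (Sum.inl s) := by
    refine ⟨fun hc => (nomatch hc), ?_⟩
    obtain ⟨r, hr | hr⟩ := cross2
    · exact ⟨r, Or.inl (Or.inr ⟨rfl, hr⟩)⟩
    · exact ⟨r, Or.inr (Or.inr ⟨rfl, hr⟩)⟩
  have hPcq : T.PairOn F1 (Sum.inl c) (Sum.inl q) :=
    ⟨h1.1, h1.2.1, h1.2.2.1, h1.2.2.2.1, h1.2.2.2.2.1, h1.2.2.2.2.2⟩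
  have hPcs : T.PairOn F2 (Sum.inl c) (Sum.inl s) :=
    ⟨h2.1, h2.2.1, h2.2.2.1, h2.2.2.2.1, h2.2.2.2.2.1, h2.2.2.2.2.2⟩
  have hPxq : T.PairOn F1 (Sum.inr ()) (Sum.inl q) := by
    refine ⟨fun r => Iff.rfl, h1.2.1, fun r => Iff.rfl, fun r => ?_, fun r => ?_, h1.2.2.2.2.2⟩
    · exact (grel_xq r).trans (h1.2.2.2.1 r)
    · exact (grel_qx r).trans (h1.2.2.2.2.1 r)
  have hPxs : T.PairOn F2 (Sum.inr ()) (Sum.inl s) := by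
    refine ⟨fun r => (h1.1 r).symm.trans (h2.1 r), h2.2.1, fun r => ?_, fun r => ?_,
      fun r => ?_, h2.2.2.2.2.2⟩
    · exact (gloop_x r).trans (h2.2.2.1 r)
    · exact (grel_xs r).trans (h2.2.2.2.1 r)
    · exact (grel_sx r).trans (h2.2.2.2.2.1 r)
  have hFinj := hF.2.1
  refine ⟨F (Sum.inl c), F (Sum.inl q), F (Sum.inr ()), F (Sum.inl s),
    fun h => hcq (Sum.inl.inj (hFinj h)),
    fun h => (nomatch hFinj h),
    fun h => hcs (Sum.inl.inj (hFinj h)),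
    fun h => (nomatch hFinj h),
    fun h => hqs (Sum.inl.inj (hFinj h)),
    fun h => (nomatch hFinj h),
    completion_pairOn hF hTcq hPcq,
    ?_,
    completion_pairOn hF hTcs hPcs,
    ?_⟩
  · have := completion_pairOn hF hTxq hPxq
    exact this
  · have := completion_pairOn hF hTxs hPxs
    exact this

end Twin
section AchDef
set_option linter.unusedTactic false
open Str

variable {L1 L2 WK : Type} {K : Str L1 L2 WK}

/-- Generic helper: a pair with exact structure `L` embeds alongside an embedding of `L`. -/
lemma pairOn_embed {V : Type} {B : Str L1 L2 V} {L : Str L1 L2 (Fin 2)} {a b : V}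
    (hab : a ≠ b) (hP : B.PairOn L a b) {e : Fin 2 → WK} (he : L.IsEmb K e)
    {S : Set V} (hS : ∀ ξ ∈ S, ξ = a ∨ ξ = b) :
    ∃ f : ↥S → WK, (B.Induced S).IsEmb K f := by
  classical
  have hga : (if a = a then e 0 else e 1) = e 0 := if_pos rfl
  have hgb : (if b = a then e 0 else e 1) = e 1 := if_neg (Ne.symm hab)
  refine ⟨_, embOn_of (B := B) (K := K) (S := S)
    (g := fun ξ => if ξ = a then e 0 else e 1) ?_ ?_ ?_⟩
  · intro x hx y hy hxy
    rcases hS x hx with rfl | rfl <;> rcases hS y hy with rfl | rfl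
    · rfl
    · rw [hga, hgb] at hxy
      exact absurd (he.1 hxy) (by decide)
    · rw [hga, hgb] at hxy
      exact absurd (he.1 hxy.symm) (by decide)
    · rfl
  · intro r x hx
    rcases hS x hx with rfl | rfl
    · rw [hga]
      exact (hP.1 r).trans (he.2.1 r 0)
    · rw [hgb]
      exact (hP.2.1 r).trans (he.2.1 r 1)
  · intro r x hx y hy
    rcases hS x hx with rfl | rfl <;> rcases hS y hy with rfl | rfl
    · rw [hga]
      exact (hP.2.2.1 r).trans (he.2.2 r 0 0)
    · rw [hga, hgb]
      exact (hP.2.2.2.1 r).trans (he.2.2 r 0 1)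
    · rw [hga, hgb]
      exact (hP.2.2.2.2.1 r).trans (he.2.2 r 1 0)
    · rw [hgb]
      exact (hP.2.2.2.2.2 r).trans (he.2.2 r 1 1)

/-- Composing an embedding into a triangle with an embedding of the triangle. -/
lemma isEmb_pairOn_comp {L : Str L1 L2 (Fin 2)} {D : Str L1 L2 (Fin 3)}
    {e : Fin 2 → Fin 3} (hE : L.IsEmb D e) {φ : Fin 3 → WK} (hφ : D.IsEmb K φ) :
    K.PairOn L (φ (e 0)) (φ (e 1)) :=
  ⟨fun r => (hφ.2.1 r (e 0)).symm.trans (hE.2.1 r 0).symm,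
   fun r => (hφ.2.1 r (e 1)).symm.trans (hE.2.1 r 1).symm,
   fun r => (hφ.2.2 r (e 0) (e 0)).symm.trans (hE.2.2 r 0 0).symm,
   fun r => (hφ.2.2 r (e 0) (e 1)).symm.trans (hE.2.2 r 0 1).symm,
   fun r => (hφ.2.2 r (e 1) (e 0)).symm.trans (hE.2.2 r 1 0).symm,
   fun r => (hφ.2.2 r (e 1) (e 1)).symm.trans (hE.2.2 r 1 1).symm⟩

variable {ℓ : ℕ} {v : ZMod ℓ → GVert K} {m : ℕ}

/-- The cycle structure augmented by chords from minimum-level vertices. -/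
def ach (K : Str L1 L2 WK) (v : ZMod ℓ → GVert K) (m : ℕ) :
    Str L1 L2 ↥(Set.range v) where
  unary r x := (Gstr K).unary r x.1
  rel r x y := (Gstr K).rel r x.1 y.1 ∨
    (∃ h2 : m < glen y.1, glen x.1 = m ∧ (ltr y.1 m h2).rel r 0 1) ∨
    (∃ h2 : m < glen x.1, glen y.1 = m ∧ (ltr x.1 m h2).rel r 1 0)

lemma ach_loop (x : ↥(Set.range v)) (r : L2) :
    (ach K v m).rel r x x ↔ (Gstr K).rel r x.1 x.1 := by
  constructor
  · rintro (h | ⟨h2, he, -⟩ | ⟨h2, he, -⟩)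
    · exact h
    · omega
    · omega
  · exact Or.inl

lemma subne_of_len {x y : ↥(Set.range v)} (h : glen x.1 ≠ glen y.1) : x ≠ y :=
  fun hc => h (by rw [hc])

lemma ach_rel_min {x y : ↥(Set.range v)} (hx : glen x.1 = m) (hy : m < glen y.1) (r : L2) :
    ((ach K v m).rel r x y ↔ (ltr y.1 m hy).rel r 0 1) ∧
    ((ach K v m).rel r y x ↔ (ltr y.1 m hy).rel r 1 0) := by
  subst hx
  have hlt : glen x.1 < glen y.1 := hy
  constructor
  · constructor
    · rintro (h | ⟨h2, -, hr⟩ | ⟨h2, he, -⟩)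
      · exact (gstr_rel_fwd hlt h).2
      · exact hr
      · omega
    · intro hr
      exact Or.inr (Or.inl ⟨hy, rfl, hr⟩)
  · constructor
    · rintro (h | ⟨h2, he, -⟩ | ⟨h2, -, hr⟩)
      · exact (gstr_rel_fwd' hlt h).2
      · omega
      · exact hr
    · intro hr
      exact Or.inr (Or.inr ⟨hy, rfl, hr⟩)

lemma ach_adj_min (hK : K.Irred) {x y : ↥(Set.range v)}
    (hx : glen x.1 = m) (hy : m < glen y.1) : (ach K v m).Adj x y := by
  refine ⟨subne_of_len (by omega), ?_⟩
  obtain ⟨r, hr | hr⟩ := ltr_cross hK y.1 m hy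
  · exact ⟨r, Or.inl ((ach_rel_min hx hy r).1.mpr hr)⟩
  · exact ⟨r, Or.inr ((ach_rel_min hx hy r).2.mpr hr)⟩

lemma ach_min_min {x y : ↥(Set.range v)} (hx : glen x.1 = m) (hy : glen y.1 = m)
    (hne : x ≠ y) (r : L2) : ¬ (ach K v m).rel r x y := by
  have hne' : x.1 ≠ y.1 := fun h => hne (Subtype.ext h)
  rintro (h | ⟨h2, -, -⟩ | ⟨h2, -, -⟩)
  · exact gstr_rel_len_ne hne' h (by omega)
  · omega
  · omega

lemma ach_min_min_nadj {x y : ↥(Set.range v)} (hx : glen x.1 = m) (hy : glen y.1 = m)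
    (hne : x ≠ y) : ¬ (ach K v m).Adj x y := by
  rintro ⟨-, r, hr | hr⟩
  · exact ach_min_min hx hy hne r hr
  · exact ach_min_min hy hx hne.symm r hr

lemma ach_adj_cases {x y : ↥(Set.range v)} (hadj : (ach K v m).Adj x y) :
    (Gstr K).Adj x.1 y.1 ∨ (glen x.1 = m ∧ m < glen y.1) ∨ (glen y.1 = m ∧ m < glen x.1) := by
  obtain ⟨hne, r, hr | hr⟩ := hadj
  have hne' : x.1 ≠ y.1 := fun h => hne (Subtype.ext h)
  · rcases hr with h | ⟨h2, he, -⟩ | ⟨h2, he, -⟩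
    · exact Or.inl ⟨hne', r, Or.inl h⟩
    · exact Or.inr (Or.inl ⟨he, h2⟩)
    · exact Or.inr (Or.inr ⟨he, h2⟩)
  have hne' : x.1 ≠ y.1 := fun h => hne (Subtype.ext h)
  · rcases hr with h | ⟨h2, he, -⟩ | ⟨h2, he, -⟩
    · exact Or.inl ⟨hne', r, Or.inr h⟩
    · exact Or.inr (Or.inr ⟨he, h2⟩)
    · exact Or.inr (Or.inl ⟨he, h2⟩)

/-- Exact pair structure on a `G`-adjacent pair, in the chorded structure. -/
lemma ach_pairOn_adj {x y : ↥(Set.range v)} (h : glen x.1 < glen y.1)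
    (hadjG : (Gstr K).Adj x.1 y.1) :
    (ach K v m).PairOn (ltr y.1 (glen x.1) h) x y := by
  have hGT := gadj_gtri h hadjG
  have hPG := gstr_pairOn h hGT
  refine ⟨hPG.1, hPG.2.1, fun r => (ach_loop x r).trans (hPG.2.2.1 r), fun r => ?_,
    fun r => ?_, fun r => (ach_loop y r).trans (hPG.2.2.2.2.2 r)⟩
  · constructor
    · rintro (hG | ⟨h2, he, hr⟩ | ⟨h2, he, -⟩)
      · exact (hPG.2.2.2.1 r).mp hG
      · subst he
        exact hr
      · omega
    · intro hr
      exact Or.inl ((hPG.2.2.2.1 r).mpr hr)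
  · constructor
    · rintro (hG | ⟨h2, he, -⟩ | ⟨h2, he, hr⟩)
      · exact (hPG.2.2.2.2.1 r).mp hG
      · omega
      · subst he
        exact hr
    · intro hr
      exact Or.inl ((hPG.2.2.2.2.1 r).mpr hr)

end AchDef
section AchLemmas
set_option linter.unusedTactic false
open Str

variable {L1 L2 WK : Type} {K : Str L1 L2 WK}
variable {ℓ : ℕ} {v : ZMod ℓ → GVert K} {m : ℕ}

lemma mem_hasNbr (hIC : (Gstr K).IsInducedCycle ℓ v) (x : ↥(Set.range v)) :
    HasNbr K x.1 := by
  obtain ⟨i, hi⟩ := x.2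
  rw [← hi]
  exact (gadj_hasNbr (hIC.1.2.2 i)).1

lemma lev_const (hIC : (Gstr K).IsInducedCycle ℓ v) (hm : ∀ i, m ≤ glen (v i))
    (i j : ZMod ℓ) :
    (∀ r, levU (v i) m r ↔ levU (v j) m r) ∧ (∀ r, levR (v i) m r ↔ levR (v j) m r) := by
  haveI : NeZero ℓ := ⟨by have := hIC.1.1; omega⟩
  constructor
  · intro r
    exact zmod_const (fun t => levU (v t) m r)
      (fun t => (lev_adj_step (hm t) (hm (t + 1)) (hIC.1.2.2 t)).1 r) i j
  · intro r
    exact zmod_const (fun t => levR (v t) m r)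
      (fun t => (lev_adj_step (hm t) (hm (t + 1)) (hIC.1.2.2 t)).2 r) i j

/-- Exact pair structure on min–nonmin pairs (chords and edges alike). -/
lemma ach_pairOn_min (hIC : (Gstr K).IsInducedCycle ℓ v) (hm : ∀ i, m ≤ glen (v i))
    {x y : ↥(Set.range v)} (hx : glen x.1 = m) (hy : m < glen y.1) :
    (ach K v m).PairOn (ltr y.1 m hy) x y := by
  obtain ⟨ix, hix⟩ := x.2
  obtain ⟨iy, hiy⟩ := y.2
  have hNx := mem_hasNbr hIC x
  have hNy := mem_hasNbr hIC y
  have hconst := lev_const hIC hm ix iy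
  refine ⟨fun r => ?_, fun r => ?_, fun r => ?_, fun r => (ach_rel_min hx hy r).1,
    fun r => (ach_rel_min hx hy r).2, fun r => ?_⟩
  · have h1 : (Gstr K).unary r x.1 ↔ levU x.1 m r :=
      (gstr_unary_iff hNx r).trans (levU_min hx r).symm
    have h2 : levU y.1 m r ↔ (ltr y.1 m hy).unary r 0 := levU_big hy r
    have h3 : levU x.1 m r ↔ levU y.1 m r := by
      rw [← hix, ← hiy]; exact hconst.1 r
    exact (h1.trans h3).trans h2
  · exact (gstr_unary_iff hNy r).trans (a1_unary y.1 0 m (glen_pos y.1) hy r)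
  · have h1 : (Gstr K).rel r x.1 x.1 ↔ levR x.1 m r :=
      (gstr_loop_iff hNx r).trans (levR_min hx r).symm
    have h2 : levR y.1 m r ↔ (ltr y.1 m hy).rel r 0 0 := levR_big hy r
    have h3 : levR x.1 m r ↔ levR y.1 m r := by
      rw [← hix, ← hiy]; exact hconst.2 r
    exact ((ach_loop x r).trans ((h1.trans h3).trans h2))
  · exact (ach_loop y r).trans
      ((gstr_loop_iff hNy r).trans (a1_rel y.1 0 m (glen_pos y.1) hy r))

/-- A vertex of the cycle has a point in `K` with its exact unary/loop type. -/
lemma vert_point {x y : GVert K} (hadj : (Gstr K).Adj x y) :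
    ∃ pt : WK, (∀ r, (Gstr K).unary r x ↔ K.unary r pt) ∧
      (∀ r, (Gstr K).rel r x x ↔ K.rel r pt pt) := by
  rcases Nat.lt_or_ge (glen x) (glen y) with h | hge
  · have hGT := gadj_gtri h hadj
    have hP := gstr_pairOn h hGT
    obtain ⟨e, he⟩ := ltr_emb y (glen x) h
    exact ⟨e 0, fun r => (hP.1 r).trans (he.2.1 r 0),
      fun r => (hP.2.2.1 r).trans (he.2.2 r 0 0)⟩
  · have h' : glen y < glen x := lt_of_le_of_ne hge (Ne.symm (gadj_len_ne hadj))
    have hGT := gadj_gtri h' hadj.symm2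
    have hP := gstr_pairOn h' hGT
    obtain ⟨e, he⟩ := ltr_emb x (glen y) h'
    exact ⟨e 1, fun r => (hP.2.1 r).trans (he.2.1 r 1),
      fun r => (hP.2.2.2.2.2 r).trans (he.2.2 r 1 1)⟩

/-- Completion of an irreducible triangle in the chorded structure. -/
lemma ach_tri_complete (hK : K.Irred) (hIC : (Gstr K).IsInducedCycle ℓ v)
    (hm : ∀ i, m ≤ glen (v i)) (x y y' : ↥(Set.range v)) (hx : glen x.1 = m)
    (hy : m < glen y.1) (hy' : m < glen y'.1) (hlen : glen y.1 < glen y'.1)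
    (hGadj : (Gstr K).Adj y.1 y'.1) (S : Set ↥(Set.range v))
    (hS : ∀ ξ ∈ S, ξ = x ∨ ξ = y ∨ ξ = y') :
    ∃ f : ↥S → WK, ((ach K v m).Induced S).IsCompletion K f := by
  classical
  have hGT := gadj_gtri hlen hGadj
  obtain ⟨D, ⟨hA, hB, hC⟩, φ, hφ⟩ := hGT m hy
  have Pxy : (ach K v m).PairOn (ltr y.1 m hy) x y := ach_pairOn_min hIC hm hx hy
  have Pxy' : (ach K v m).PairOn (ltr y'.1 m hy') x y' := ach_pairOn_min hIC hm hx hy'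
  have Pyy' : (ach K v m).PairOn (ltr y'.1 (glen y.1) hlen) y y' := ach_pairOn_adj hlen hGadj
  have KPxy : K.PairOn (ltr y.1 m hy) (φ (![0,1] 0)) (φ (![0,1] 1)) :=
    isEmb_pairOn_comp hA hφ
  have KPyy' : K.PairOn (ltr y'.1 (glen y.1) hlen) (φ (![1,2] 0)) (φ (![1,2] 1)) :=
    isEmb_pairOn_comp hB hφ
  have KPxy' : K.PairOn (ltr y'.1 m (hy.trans hlen)) (φ (![0,2] 0)) (φ (![0,2] 1)) :=
    isEmb_pairOn_comp hC hφ
  have KPxy2 : K.PairOn (ltr y.1 m hy) (φ 0) (φ 1) := KPxy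
  have KPyy2 : K.PairOn (ltr y'.1 (glen y.1) hlen) (φ 1) (φ 2) := KPyy'
  have KPxy'2 : K.PairOn (ltr y'.1 m hy') (φ 0) (φ 2) := KPxy'
  have hxy : x ≠ y := subne_of_len (by omega)
  have hxy' : x ≠ y' := subne_of_len (by omega)
  have hyy' : y ≠ y' := subne_of_len (by omega)
  set g : ↥(Set.range v) → WK :=
    fun ξ => if ξ = x then φ 0 else if ξ = y then φ 1 else φ 2 with hg
  have hgx : g x = φ 0 := if_pos rfl
  have hgy : g y = φ 1 := by
    simp only [hg]
    rw [if_neg (Ne.symm hxy)]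
    simp
  have hgy' : g y' = φ 2 := by
    simp only [hg]
    rw [if_neg (Ne.symm hxy'), if_neg (Ne.symm hyy')]

  have hφ01 : φ 0 ≠ φ 1 := fun h => absurd (hφ.1 h) (by decide)
  have hφ02 : φ 0 ≠ φ 2 := fun h => absurd (hφ.1 h) (by decide)
  have hφ12 : φ 1 ≠ φ 2 := fun h => absurd (hφ.1 h) (by decide)
  refine ⟨_, completionOn_of hK (S := S) (g := g) ?_ ?_ ?_ ?_ ?_⟩
  · intro a ha b hb hab
    rcases hS a ha with rfl | rfl | rfl <;> rcases hS b hb with rfl | rfl | rfl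
    · rfl
    · rw [hgx, hgy] at hab; exact absurd hab hφ01
    · rw [hgx, hgy'] at hab; exact absurd hab hφ02
    · rw [hgx, hgy] at hab; exact absurd hab.symm hφ01
    · rfl
    · rw [hgy, hgy'] at hab; exact absurd hab hφ12
    · rw [hgx, hgy'] at hab; exact absurd hab.symm hφ02
    · rw [hgy, hgy'] at hab; exact absurd hab.symm hφ12
    · rfl
  · intro r a ha
    rcases hS a ha with rfl | rfl | rfl
    · rw [hgx]; exact (Pxy.1 r).trans (KPxy2.1 r).symm
    · rw [hgy]; exact (Pxy.2.1 r).trans (KPxy2.2.1 r).symm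
    · rw [hgy']; exact (Pxy'.2.1 r).trans (KPxy'2.2.1 r).symm
  · intro r a ha
    rcases hS a ha with rfl | rfl | rfl
    · rw [hgx]; exact (Pxy.2.2.1 r).trans (KPxy2.2.2.1 r).symm
    · rw [hgy]; exact (Pxy.2.2.2.2.2 r).trans (KPxy2.2.2.2.2.2 r).symm
    · rw [hgy']; exact (Pxy'.2.2.2.2.2 r).trans (KPxy'2.2.2.2.2.2 r).symm
  · intro r a ha b hb hne hr
    rcases hS a ha with rfl | rfl | rfl <;> rcases hS b hb with rfl | rfl | rfl
    · exact absurd rfl hne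
    · rw [hgx, hgy]; exact (KPxy2.2.2.2.1 r).mpr ((Pxy.2.2.2.1 r).mp hr)
    · rw [hgx, hgy']; exact (KPxy'2.2.2.2.1 r).mpr ((Pxy'.2.2.2.1 r).mp hr)
    · rw [hgx, hgy]; exact (KPxy2.2.2.2.2.1 r).mpr ((Pxy.2.2.2.2.1 r).mp hr)
    · exact absurd rfl hne
    · rw [hgy, hgy']; exact (KPyy2.2.2.2.1 r).mpr ((Pyy'.2.2.2.1 r).mp hr)
    · rw [hgx, hgy']; exact (KPxy'2.2.2.2.2.1 r).mpr ((Pxy'.2.2.2.2.1 r).mp hr)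
    · rw [hgy, hgy']; exact (KPyy2.2.2.2.2.1 r).mpr ((Pyy'.2.2.2.2.1 r).mp hr)
    · exact absurd rfl hne
  · intro a ha b hb hadj r
    rcases hS a ha with rfl | rfl | rfl <;> rcases hS b hb with rfl | rfl | rfl
    · rw [hgx]; exact (Pxy.2.2.1 r).trans (KPxy2.2.2.1 r).symm
    · rw [hgx, hgy]; exact (Pxy.2.2.2.1 r).trans (KPxy2.2.2.2.1 r).symm
    · rw [hgx, hgy']; exact (Pxy'.2.2.2.1 r).trans (KPxy'2.2.2.2.1 r).symm
    · rw [hgx, hgy]; exact (Pxy.2.2.2.2.1 r).trans (KPxy2.2.2.2.2.1 r).symm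
    · rw [hgy]; exact (Pxy.2.2.2.2.2 r).trans (KPxy2.2.2.2.2.2 r).symm
    · rw [hgy, hgy']; exact (Pyy'.2.2.2.1 r).trans (KPyy2.2.2.2.1 r).symm
    · rw [hgx, hgy']; exact (Pxy'.2.2.2.2.1 r).trans (KPxy'2.2.2.2.2.1 r).symm
    · rw [hgy, hgy']; exact (Pyy'.2.2.2.2.1 r).trans (KPyy2.2.2.2.2.1 r).symm
    · rw [hgy']; exact (Pxy'.2.2.2.2.2 r).trans (KPxy'2.2.2.2.2.2 r).symm

end AchLemmas
section AchZ4
set_option linter.unusedTactic false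
open Str

variable {L1 L2 WK : Type} {K : Str L1 L2 WK} [Countable WK]
variable {ℓ : ℕ} {v : ZMod ℓ → GVert K} {m : ℕ}

/-- Completion of the exceptional induced 4-cycles (two opposite min vertices). -/
lemma ach_z4_complete (hK : K.Irred) (hyp : CompletionHyp K)
    (hIC : (Gstr K).IsInducedCycle ℓ v) (hm : ∀ i, m ≤ glen (v i))
    (z a z' b : ↥(Set.range v))
    (hz : glen z.1 = m) (hz' : glen z'.1 = m) (ha : m < glen a.1) (hb : m < glen b.1)
    (hzz' : z ≠ z') (hab : a ≠ b) (hnab : ¬ (ach K v m).Adj a b)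
    (S : Set ↥(Set.range v)) (hS : ∀ ξ ∈ S, ξ = z ∨ ξ = a ∨ ξ = z' ∨ ξ = b) :
    ∃ f : ↥S → WK, ((ach K v m).Induced S).IsCompletion K f := by
  classical
  set La : Str L1 L2 (Fin 2) := ltr a.1 m ha with hLa
  set Lb : Str L1 L2 (Fin 2) := ltr b.1 m hb with hLb
  have Pza : (ach K v m).PairOn La z a := ach_pairOn_min hIC hm hz ha
  have Pz'a : (ach K v m).PairOn La z' a := ach_pairOn_min hIC hm hz' ha
  have Pzb : (ach K v m).PairOn Lb z b := ach_pairOn_min hIC hm hz hb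
  have Pz'b : (ach K v m).PairOn Lb z' b := ach_pairOn_min hIC hm hz' hb
  obtain ⟨c, q, s, hcq, hcs, hqs, KPa, KPb⟩ :=
    path3 hK hyp La Lb (ltr_emb a.1 m ha) (ltr_emb b.1 m hb)
      (fun r => (Pza.1 r).symm.trans (Pzb.1 r))
      (fun r => (Pza.2.2.1 r).symm.trans (Pzb.2.2.1 r))
      (ltr_cross hK a.1 m ha) (ltr_cross hK b.1 m hb)
  obtain ⟨p, a', z'', b', d1, d2, d3, d4, d5, d6, QP1, QP2, QP3, QP4⟩ :=
    twin hK hyp La Lb c q s hcq hcs hqs KPa KPb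
  have hza : z ≠ a := subne_of_len (by omega)
  have hzb : z ≠ b := subne_of_len (by omega)
  have haz' : a ≠ z' := subne_of_len (by omega)
  have hz'b : z' ≠ b := subne_of_len (by omega)
  set g : ↥(Set.range v) → WK :=
    fun ξ => if ξ = z then p else if ξ = a then a' else if ξ = z' then z'' else b' with hg
  have hgz : g z = p := if_pos rfl
  have hga : g a = a' := by
    simp only [hg]
    rw [if_neg (Ne.symm hza)]
    simp
  have hgz' : g z' = z'' := by
    simp only [hg]
    rw [if_neg (Ne.symm hzz'), if_neg (Ne.symm haz')]
    simp
  have hgb : g b = b' := by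
    simp only [hg]
    rw [if_neg (Ne.symm hzb), if_neg (Ne.symm hab), if_neg (Ne.symm hz'b)]
  refine ⟨_, completionOn_of hK (S := S) (g := g) ?_ ?_ ?_ ?_ ?_⟩
  · intro x hx y hy hxy
    rcases hS x hx with rfl | rfl | rfl | rfl <;> rcases hS y hy with rfl | rfl | rfl | rfl
    · rfl
    · rw [hgz, hga] at hxy; exact absurd hxy d1
    · rw [hgz, hgz'] at hxy; exact absurd hxy d2
    · rw [hgz, hgb] at hxy; exact absurd hxy d3
    · rw [hgz, hga] at hxy; exact absurd hxy.symm d1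
    · rfl
    · rw [hga, hgz'] at hxy; exact absurd hxy d4
    · rw [hga, hgb] at hxy; exact absurd hxy d5
    · rw [hgz, hgz'] at hxy; exact absurd hxy.symm d2
    · rw [hga, hgz'] at hxy; exact absurd hxy.symm d4
    · rfl
    · rw [hgz', hgb] at hxy; exact absurd hxy d6
    · rw [hgz, hgb] at hxy; exact absurd hxy.symm d3
    · rw [hga, hgb] at hxy; exact absurd hxy.symm d5
    · rw [hgz', hgb] at hxy; exact absurd hxy.symm d6
    · rfl
  · intro r x hx
    rcases hS x hx with rfl | rfl | rfl | rfl
    · rw [hgz]; exact (Pza.1 r).trans (QP1.1 r).symm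
    · rw [hga]; exact (Pza.2.1 r).trans (QP1.2.1 r).symm
    · rw [hgz']; exact (Pz'a.1 r).trans (QP2.1 r).symm
    · rw [hgb]; exact (Pzb.2.1 r).trans (QP3.2.1 r).symm
  · intro r x hx
    rcases hS x hx with rfl | rfl | rfl | rfl
    · rw [hgz]; exact (Pza.2.2.1 r).trans (QP1.2.2.1 r).symm
    · rw [hga]; exact (Pza.2.2.2.2.2 r).trans (QP1.2.2.2.2.2 r).symm
    · rw [hgz']; exact (Pz'a.2.2.1 r).trans (QP2.2.2.1 r).symm
    · rw [hgb]; exact (Pzb.2.2.2.2.2 r).trans (QP3.2.2.2.2.2 r).symm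
  · intro r x hx y hy hne hr
    rcases hS x hx with rfl | rfl | rfl | rfl <;> rcases hS y hy with rfl | rfl | rfl | rfl
    · exact absurd rfl hne
    · rw [hgz, hga]; exact (QP1.2.2.2.1 r).mpr ((Pza.2.2.2.1 r).mp hr)
    · exact absurd hr (ach_min_min hz hz' hzz' r)
    · rw [hgz, hgb]; exact (QP3.2.2.2.1 r).mpr ((Pzb.2.2.2.1 r).mp hr)
    · rw [hgz, hga]; exact (QP1.2.2.2.2.1 r).mpr ((Pza.2.2.2.2.1 r).mp hr)
    · exact absurd rfl hne
    · rw [hga, hgz']; exact (QP2.2.2.2.2.1 r).mpr ((Pz'a.2.2.2.2.1 r).mp hr)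
    · exact (hnab ⟨hab, r, Or.inl hr⟩).elim
    · exact absurd hr (ach_min_min hz' hz hzz'.symm r)
    · rw [hgz', hga]; exact (QP2.2.2.2.1 r).mpr ((Pz'a.2.2.2.1 r).mp hr)
    · exact absurd rfl hne
    · rw [hgz', hgb]; exact (QP4.2.2.2.1 r).mpr ((Pz'b.2.2.2.1 r).mp hr)
    · rw [hgz, hgb]; exact (QP3.2.2.2.2.1 r).mpr ((Pzb.2.2.2.2.1 r).mp hr)
    · exact (hnab ⟨hab, r, Or.inr hr⟩).elim
    · rw [hgz', hgb]; exact (QP4.2.2.2.2.1 r).mpr ((Pz'b.2.2.2.2.1 r).mp hr)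
    · exact absurd rfl hne
  · intro x hx y hy hadj r
    rcases hS x hx with rfl | rfl | rfl | rfl <;> rcases hS y hy with rfl | rfl | rfl | rfl
    · rw [hgz]; exact (Pza.2.2.1 r).trans (QP1.2.2.1 r).symm
    · rw [hgz, hga]; exact (Pza.2.2.2.1 r).trans (QP1.2.2.2.1 r).symm
    · exact absurd hadj (ach_min_min_nadj hz hz' hzz')
    · rw [hgz, hgb]; exact (Pzb.2.2.2.1 r).trans (QP3.2.2.2.1 r).symm
    · rw [hgz, hga]; exact (Pza.2.2.2.2.1 r).trans (QP1.2.2.2.2.1 r).symm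
    · rw [hga]; exact (Pza.2.2.2.2.2 r).trans (QP1.2.2.2.2.2 r).symm
    · rw [hga, hgz']; exact (Pz'a.2.2.2.2.1 r).trans (QP2.2.2.2.2.1 r).symm
    · exact absurd hadj hnab
    · exact absurd hadj (ach_min_min_nadj hz' hz hzz'.symm)
    · rw [hgz', hga]; exact (Pz'a.2.2.2.1 r).trans (QP2.2.2.2.1 r).symm
    · rw [hgz']; exact (Pz'a.2.2.1 r).trans (QP2.2.2.1 r).symm
    · rw [hgz', hgb]; exact (Pz'b.2.2.2.1 r).trans (QP4.2.2.2.1 r).symm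
    · rw [hgz, hgb]; exact (Pzb.2.2.2.2.1 r).trans (QP3.2.2.2.2.1 r).symm
    · exact absurd hadj.symm2 hnab
    · rw [hgz', hgb]; exact (Pz'b.2.2.2.2.1 r).trans (QP4.2.2.2.2.1 r).symm
    · rw [hgb]; exact (Pzb.2.2.2.2.2 r).trans (QP3.2.2.2.2.2 r).symm

end AchZ4
section AchCC
set_option linter.unusedTactic false
open Str

variable {L1 L2 WK : Type} {K : Str L1 L2 WK} [Countable WK]
variable {ℓ : ℕ} {v : ZMod ℓ → GVert K} {m : ℕ}

lemma ach_cc (hK : K.Irred) (hyp : CompletionHyp K)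
    (hIC : (Gstr K).IsInducedCycle ℓ v) (hm : ∀ i, m ≤ glen (v i))
    (hmin : ∃ i, glen (v i) = m) :
    (ach K v m).CycleCompletes K := by
  classical
  intro n w hw
  haveI : NeZero n := ⟨by have := hw.1.1; omega⟩
  haveI : NeZero ℓ := ⟨by have := hIC.1.1; omega⟩
  have hn3 : 3 ≤ n := hw.1.1
  have hge : ∀ t : ZMod n, m ≤ glen (w t).1 := by
    intro t; obtain ⟨i, hi⟩ := (w t).2; rw [← hi]; exact hm i
  have hexmin : ∃ t, glen (w t).1 = m := by
    by_contra hno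
    push_neg at hno
    choose ι hι using fun t => (w t).2
    have ιinj : Function.Injective ι := by
      intro t t' htt
      apply hw.1.2.1
      apply Subtype.ext
      rw [← hι t, ← hι t', htt]
    have hstep : ∀ t, ι (t + 1) = ι t + 1 ∨ ι t = ι (t + 1) + 1 := by
      intro t
      have hadj := hw.1.2.2 t
      have hG : (Gstr K).Adj (w t).1 (w (t + 1)).1 := by
        rcases ach_adj_cases hadj with h | ⟨he, -⟩ | ⟨he, -⟩
        · exact h
        · exact absurd he (hno t)
        · exact absurd he (hno (t + 1))
      have hG2 : (Gstr K).Adj (v (ι t)) (v (ι (t + 1))) := by rw [hι, hι]; exact hG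
      exact cyc_consec hIC hG2
    set P : ZMod n → Prop := fun t => ι (t + 1) = ι t + 1 with hPdef
    have hPF : ∀ t, ¬ P t → ι t = ι (t + 1) + 1 := fun t h => (hstep t).resolve_left h
    have hcontra2 : ∀ t : ZMod n, t + 1 + 1 ≠ t := by
      intro t hc
      rw [add_assoc] at hc
      have h2 : (1 : ZMod n) + 1 = 0 := add_eq_left.mp hc
      have h2' : ((2:ℕ) : ZMod n) = 0 := by push_cast; rw [← h2]; ring
      have := Nat.le_of_dvd (by omega) ((ZMod.natCast_eq_zero_iff 2 n).mp h2')
      omega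
    have hkey : ∀ t, P t ↔ P (t + 1) := by
      intro t
      constructor
      · intro hPt
        by_contra hPn
        have h1 := hPF (t + 1) hPn
        have h2 : ι (t + 1 + 1) = ι t := add_right_cancel (h1.symm.trans hPt)
        exact hcontra2 t (ιinj h2)
      · intro hPt1
        by_contra hPn
        have h1 := hPF t hPn
        have h2 : ι (t + 1 + 1) = ι t := hPt1.trans h1.symm
        exact hcontra2 t (ιinj h2)
    have hdir : (∀ t, P t) ∨ (∀ t, ¬ P t) := by
      rcases Classical.em (P 0) with h0 | h0
      · exact Or.inl fun t => (zmod_const P hkey t 0).mpr h0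
      · exact Or.inr fun t ht => h0 ((zmod_const P hkey t 0).mp ht)
    have hsurj : Function.Surjective ι := by
      rcases hdir with hall | hall
      · exact zmod_succ_surj hn3 (by have := hIC.1.1; omega) ι ιinj hall
      · have hstep' : ∀ t, (fun t => - ι t) (t + 1) = (fun t => - ι t) t + 1 := by
          intro t
          have h1 := hPF t (hall t)
          simp only
          rw [h1]; ring
        have hinj' : Function.Injective fun t => - ι t :=
          fun t t' h => ιinj (neg_injective h)
        have hs := zmod_succ_surj hn3 (by have := hIC.1.1; omega) _ hinj' hstep'
        intro y
        obtain ⟨t, ht⟩ := hs (-y)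
        exact ⟨t, neg_injective ht⟩
    obtain ⟨i0, hi0⟩ := hmin
    obtain ⟨t, ht⟩ := hsurj i0
    apply hno t
    rw [← hι t, ht]
    exact hi0
  obtain ⟨t0, ht0⟩ := hexmin
  have nadjmin : ∀ t t' : ZMod n, glen (w t).1 = m → (ach K v m).Adj (w t) (w t') →
      m < glen (w t').1 := by
    intro t t' hmt hadj
    rcases ach_adj_cases hadj with hG | ⟨-, h2⟩ | ⟨he, h2⟩
    · refine lt_of_le_of_ne (hge t') fun hc => gadj_len_ne hG ?_
      rw [hmt, ← hc]
    · exact h2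
    · omega
  rcases (by omega : n = 3 ∨ n = 4 ∨ 5 ≤ n) with hn | hn | hn
  · -- triangles
    subst hn
    have z3d : ∀ t : ZMod 3, t + 2 + 1 = t := by decide
    have z3e : ∀ t t' : ZMod 3, t' = t ∨ t' = t + 1 ∨ t' = t + 2 := by decide
    have z3x : ∀ t : ZMod 3, t + 1 + 1 = t + 2 := by decide
    have ham : m < glen (w (t0 + 1)).1 := nadjmin t0 (t0 + 1) ht0 (hw.1.2.2 t0)
    have hbm : m < glen (w (t0 + 2)).1 := by
      have h := hw.1.2.2 (t0 + 2)
      rw [z3d t0] at h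
      exact nadjmin t0 (t0 + 2) ht0 h.symm2
    have hadj12 : (ach K v m).Adj (w (t0 + 1)) (w (t0 + 2)) := by
      have h := hw.1.2.2 (t0 + 1)
      rwa [z3x t0] at h
    have hG12 : (Gstr K).Adj (w (t0 + 1)).1 (w (t0 + 2)).1 := by
      rcases ach_adj_cases hadj12 with h | ⟨he, -⟩ | ⟨he, -⟩
      · exact h
      · omega
      · omega
    have hSsub : ∀ ξ ∈ Set.range w, ξ = w t0 ∨ ξ = w (t0 + 1) ∨ ξ = w (t0 + 2) := by
      rintro ξ ⟨t, rfl⟩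
      rcases z3e t0 t with rfl | rfl | rfl
      exacts [Or.inl rfl, Or.inr (Or.inl rfl), Or.inr (Or.inr rfl)]
    rcases Nat.lt_or_ge (glen (w (t0 + 1)).1) (glen (w (t0 + 2)).1) with hlt | hge2
    · exact ach_tri_complete hK hIC hm (w t0) (w (t0 + 1)) (w (t0 + 2)) ht0 ham hbm hlt
        hG12 _ hSsub
    · have hlt' : glen (w (t0 + 2)).1 < glen (w (t0 + 1)).1 :=
        lt_of_le_of_ne hge2 (Ne.symm (gadj_len_ne hG12))
      have hSsub' : ∀ ξ ∈ Set.range w, ξ = w t0 ∨ ξ = w (t0 + 2) ∨ ξ = w (t0 + 1) := by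
        intro ξ h
        rcases hSsub ξ h with h' | h' | h'
        exacts [Or.inl h', Or.inr (Or.inr h'), Or.inr (Or.inl h')]
      exact ach_tri_complete hK hIC hm (w t0) (w (t0 + 2)) (w (t0 + 1)) ht0 hbm ham hlt'
        hG12.symm2 _ hSsub'
  · -- exceptional 4-cycles
    subst hn
    have z4a : ∀ t : ZMod 4, t ≠ t + 2 := by decide
    have z4b : ∀ t : ZMod 4, t + 2 ≠ t + 1 := by decide
    have z4c : ∀ t : ZMod 4, t ≠ t + 2 + 1 := by decide
    have z4d : ∀ t : ZMod 4, t + 3 + 1 = t := by decide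
    have z4e : ∀ t t' : ZMod 4, t' = t ∨ t' = t + 1 ∨ t' = t + 2 ∨ t' = t + 3 := by decide
    have z4f : ∀ t : ZMod 4, t + 1 ≠ t + 3 := by decide
    have z4g : ∀ t : ZMod 4, t + 3 ≠ t + 1 + 1 := by decide
    have z4h : ∀ t : ZMod 4, t + 1 ≠ t + 3 + 1 := by decide
    have h2m : glen (w (t0 + 2)).1 = m := by
      by_contra hc
      have hlt := lt_of_le_of_ne (hge _) (Ne.symm hc)
      exact hw.2 t0 (t0 + 2) (z4a t0) (z4b t0) (z4c t0) (ach_adj_min hK ht0 hlt)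
    have ham : m < glen (w (t0 + 1)).1 := nadjmin t0 (t0 + 1) ht0 (hw.1.2.2 t0)
    have hbm : m < glen (w (t0 + 3)).1 := by
      have h := hw.1.2.2 (t0 + 3)
      rw [z4d t0] at h
      exact nadjmin t0 (t0 + 3) ht0 h.symm2
    have hnab : ¬ (ach K v m).Adj (w (t0 + 1)) (w (t0 + 3)) :=
      hw.2 (t0 + 1) (t0 + 3) (z4f t0) (z4g t0) (z4h t0)
    have hzz' : w t0 ≠ w (t0 + 2) := fun h => z4a t0 (hw.1.2.1 h)
    have hab' : w (t0 + 1) ≠ w (t0 + 3) := fun h => z4f t0 (hw.1.2.1 h)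
    refine ach_z4_complete hK hyp hIC hm (w t0) (w (t0 + 1)) (w (t0 + 2)) (w (t0 + 3))
      ht0 h2m ham hbm hzz' hab' hnab (Set.range w) ?_
    rintro ξ ⟨t, rfl⟩
    rcases z4e t0 t with rfl | rfl | rfl | rfl
    · exact Or.inl rfl
    · exact Or.inr (Or.inl rfl)
    · exact Or.inr (Or.inr (Or.inl rfl))
    · exact Or.inr (Or.inr (Or.inr rfl))
  · -- no induced cycles of length at least 5
    exfalso
    have litne : ∀ (a b : ℕ), a < n → b < n → a ≠ b →
        ∀ t : ZMod n, t + (a : ZMod n) ≠ t + (b : ZMod n) := by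
      intro a b ha hb hab t h
      rw [add_right_inj] at h
      exact hab (zmod_cast_inj ha hb h)
    have c0 : t0 + ((0:ℕ) : ZMod n) = t0 := by push_cast; ring
    have c1 : t0 + ((1:ℕ) : ZMod n) = t0 + 1 := by push_cast; ring
    have c2 : t0 + ((2:ℕ) : ZMod n) = t0 + 2 := by push_cast; ring
    have c3 : t0 + ((3:ℕ) : ZMod n) = t0 + 3 := by push_cast; ring
    have c4 : t0 + ((4:ℕ) : ZMod n) = t0 + 4 := by push_cast; ring
    have ne02 : t0 ≠ t0 + 2 := by
      have h := litne 0 2 (by omega) (by omega) (by omega) t0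
      rw [c0, c2] at h
      exact h
    have ne21 : t0 + 2 ≠ t0 + 1 := by
      have h := litne 2 1 (by omega) (by omega) (by omega) t0
      rw [c2, c1] at h
      exact h
    have ne03 : t0 ≠ t0 + 3 := by
      have h := litne 0 3 (by omega) (by omega) (by omega) t0
      rw [c0, c3] at h
      exact h
    have ne31 : t0 + 3 ≠ t0 + 1 := by
      have h := litne 3 1 (by omega) (by omega) (by omega) t0
      rw [c3, c1] at h
      exact h
    have ne04 : t0 ≠ t0 + 4 := by
      have h := litne 0 4 (by omega) (by omega) (by omega) t0
      rw [c0, c4] at h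
      exact h
    have ne23 : t0 + 2 ≠ t0 + 3 := by
      have h := litne 2 3 (by omega) (by omega) (by omega) t0
      rw [c2, c3] at h
      exact h
    have e23 : t0 + 2 + 1 = t0 + 3 := by rw [add_assoc]; norm_num
    have e34 : t0 + 3 + 1 = t0 + 4 := by rw [add_assoc]; norm_num
    have h2m : glen (w (t0 + 2)).1 = m := by
      by_contra hc
      have hlt := lt_of_le_of_ne (hge _) (Ne.symm hc)
      exact hw.2 t0 (t0 + 2) ne02 ne21 (by rw [e23]; exact ne03) (ach_adj_min hK ht0 hlt)
    have h3m : glen (w (t0 + 3)).1 = m := by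
      by_contra hc
      have hlt := lt_of_le_of_ne (hge _) (Ne.symm hc)
      exact hw.2 t0 (t0 + 3) ne03 ne31 (by rw [e34]; exact ne04) (ach_adj_min hK ht0 hlt)
    have hadj23 := hw.1.2.2 (t0 + 2)
    rw [e23] at hadj23
    exact ach_min_min_nadj h2m h3m hadj23.1 hadj23

end AchCC
section AchSmall
set_option linter.unusedTactic false
open Str

variable {L1 L2 WK : Type} {K : Str L1 L2 WK}
variable {ℓ : ℕ} {v : ZMod ℓ → GVert K} {m : ℕ}

lemma ach_small (hK : K.Irred) (hIC : (Gstr K).IsInducedCycle ℓ v)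
    (hm : ∀ i, m ≤ glen (v i)) :
    (ach K v m).SmallIrredEmbed K 2 := by
  classical
  intro S hfin hcard hirr
  rcases S.eq_empty_or_nonempty with rfl | ⟨x, hx⟩
  · refine ⟨fun ξ => ((Set.mem_empty_iff_false _).mp ξ.2).elim, ?_, ?_, ?_⟩
    · intro a
      exact ((Set.mem_empty_iff_false _).mp a.2).elim
    · intro r a
      exact ((Set.mem_empty_iff_false _).mp a.2).elim
    · intro r a
      exact ((Set.mem_empty_iff_false _).mp a.2).elim
  · by_cases h2 : ∃ y ∈ S, y ≠ x
    · obtain ⟨y, hy, hyx⟩ := h2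
      have hSsub : ∀ ξ ∈ S, ξ = x ∨ ξ = y := by
        intro ξ hξ
        by_contra hc
        push_neg at hc
        have hsub : ({x, y, ξ} : Set ↥(Set.range v)) ⊆ S := by
          intro t ht
          rcases ht with rfl | rfl | rfl
          · exact hx
          · exact hy
          · exact hξ
        have hxm : x ∉ ({y, ξ} : Set ↥(Set.range v)) := by
          rintro (rfl | rfl)
          · exact hyx rfl
          · exact hc.1 rfl
        have h3 : ({x, y, ξ} : Set ↥(Set.range v)).ncard = 3 := by
          rw [Set.ncard_insert_of_notMem hxm (Set.toFinite _),
            Set.ncard_pair (fun h => hc.2 h.symm)]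
        have := Set.ncard_le_ncard hsub hfin
        omega
      have hadj : (ach K v m).Adj x y :=
        induced_adj (hirr ⟨x, hx⟩ ⟨y, hy⟩
          (fun hcc => hyx (congrArg Subtype.val hcc).symm))
      have hS' : ∀ ξ ∈ S, ξ = y ∨ ξ = x := fun ξ h => (hSsub ξ h).symm
      rcases ach_adj_cases hadj with hG | ⟨hxm, hym⟩ | ⟨hym, hxm⟩
      · rcases Nat.lt_or_ge (glen x.1) (glen y.1) with hlt | hge2
        · obtain ⟨e, he⟩ := ltr_emb y.1 (glen x.1) hlt
          exact pairOn_embed hadj.1 (ach_pairOn_adj hlt hG) he hSsub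
        · have hlt' : glen y.1 < glen x.1 := lt_of_le_of_ne hge2 (Ne.symm (gadj_len_ne hG))
          obtain ⟨e, he⟩ := ltr_emb x.1 (glen y.1) hlt'
          exact pairOn_embed hyx (ach_pairOn_adj hlt' hG.symm2) he hS'
      · obtain ⟨e, he⟩ := ltr_emb y.1 m hym
        exact pairOn_embed hadj.1 (ach_pairOn_min hIC hm hxm hym) he hSsub
      · obtain ⟨e, he⟩ := ltr_emb x.1 m hxm
        exact pairOn_embed hyx (ach_pairOn_min hIC hm hym hxm) he hS'
    · push_neg at h2
      obtain ⟨i, hi⟩ := x.2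
      have hadjG : (Gstr K).Adj x.1 (v (i + 1)) := by
        rw [← hi]
        exact hIC.1.2.2 i
      obtain ⟨pt, hptu, hptl⟩ := vert_point hadjG
      refine ⟨fun _ => pt, ?_, ?_, ?_⟩
      · intro a b hab
        apply Subtype.ext
        rw [h2 a.1 a.2, h2 b.1 b.2]
      · intro r a
        have ha := h2 a.1 a.2
        show (ach K v m).unary r a.1 ↔ _
        rw [ha]
        exact hptu r
      · intro r a b
        have ha := h2 a.1 a.2
        have hb := h2 b.1 b.2
        show (ach K v m).rel r a.1 b.1 ↔ _
        rw [ha, hb]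
        exact (ach_loop x r).trans (hptl r)
end AchSmall

open Str in
theorem G_cycles_complete' {L1 L2 WK : Type} [Finite L1] [Finite L2]
    [Countable WK] [Infinite WK]
    (K : Str L1 L2 WK) (hK : K.Irred) (hyp : CompletionHyp K) :
    (Gstr K).CycleCompletes K := by
  classical
  intro ℓ v hIC
  haveI : NeZero ℓ := ⟨by have := hIC.1.1; omega⟩
  obtain ⟨s0, hs0⟩ := Finite.exists_min fun i => glen (v i)
  haveI : Countable ↥(Set.range v) := (Set.finite_range v).countable
  obtain ⟨f, hf⟩ := hyp ↥(Set.range v) (ach K v (glen (v s0)))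
    (ach_cc hK hyp hIC hs0 ⟨s0, rfl⟩) (ach_small hK hIC hs0)
  refine ⟨f, hK, hf.2.1,
    ⟨⟨fun r x hx => hf.2.2.1.1 r x hx, fun r x y hr => hf.2.2.1.2 r x y (Or.inl hr)⟩, ?_⟩⟩
  intro T hT
  refine ⟨?_, fun r ξ => ?_, fun r ξ η => ?_⟩
  · intro a b hab
    exact Subtype.ext (hf.2.1 hab)
  · exact (completion_vertexOn hf ξ.1).1 r
  · rcases eq_or_ne ξ η with rfl | hne
    · exact ((ach_loop ξ.1 r).symm).trans ((completion_vertexOn hf ξ.1).2 r)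
    · have hGadj : (Gstr K).Adj ξ.1.1 η.1.1 := induced_adj (induced_adj (hT ξ η hne))
      have hAdjA : (ach K v (glen (v s0))).Adj ξ.1 η.1 := by
        obtain ⟨hne', r', hr'⟩ := hGadj
        exact ⟨fun hc => hne' (congrArg Subtype.val hc), r', hr'.imp Or.inl Or.inl⟩
      rcases Nat.lt_or_ge (glen ξ.1.1) (glen η.1.1) with hlt | hge2
      · have PG := gstr_pairOn hlt (gadj_gtri hlt hGadj)
        have PA := ach_pairOn_adj (m := glen (v s0)) hlt hGadj
        have PK := completion_pairOn hf hAdjA PA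
        exact (PG.2.2.2.1 r).trans (PK.2.2.2.1 r).symm
      · have hlt' : glen η.1.1 < glen ξ.1.1 :=
          lt_of_le_of_ne hge2 (Ne.symm (gadj_len_ne hGadj))
        have PG := gstr_pairOn hlt' (gadj_gtri hlt' hGadj.symm2)
        have PA := ach_pairOn_adj (m := glen (v s0)) hlt' hGadj.symm2
        have PK := completion_pairOn hf hAdjA.symm2 PA
        exact (PG.2.2.2.2.1 r).trans (PK.2.2.2.2.1 r).symm

/-- Every induced cycle in the word structure `G` has a completion to `K`. -/
theorem G_cycles_complete {L1 L2 WK : Type} [Finite L1] [Finite L2]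
    [Countable WK] [Infinite WK]
    (K : Str L1 L2 WK) (hK : K.Irred) (hyp : CompletionHyp K) :
    (Gstr K).CycleCompletes K := by
  exact G_cycles_complete' K hK hyp
end

section
/- With G defined as the parameter-word structure over the alphabet Σ of two-element substructures of K, there exists a completion c : G → K, i.e., an injective homomorphism-embedding from G into K. -/
/-! ### Auxiliary material -/

section Aux

variable {L1 L2 V V' W : Type}

open Str

theorem Str.Adj.symm {A : Str L1 L2 V} {x y : V} (h : A.Adj x y) : A.Adj y x :=
  ⟨h.1.symm, h.2.imp fun _ hr => hr.symm⟩

/-- An embedding is a completion. -/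
theorem completion_of_emb {A : Str L1 L2 V} {K : Str L1 L2 W} (hK : K.Irred) {f : V → W}
    (h : A.IsEmb K f) : A.IsCompletion K f := by
  refine ⟨hK, h.1, ⟨⟨fun r x hx => (h.2.1 r x).1 hx, fun r x y hxy => (h.2.2 r x y).1 hxy⟩, ?_⟩⟩
  intro S _
  exact ⟨fun x y hxy => Subtype.ext (h.1 hxy),
    fun r x => h.2.1 r x.1, fun r x y => h.2.2 r x.1 y.1⟩

theorem ncard_split {α : Type _} (S : Set α) (hF : S.Finite) (h : S.ncard ≤ 2) :
    S = ∅ ∨ (∃ a, S = {a}) ∨ (∃ a b, a ≠ b ∧ S = {a, b}) := by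
  rcases Set.eq_empty_or_nonempty S with h0 | ⟨a, ha⟩
  · exact Or.inl h0
  by_cases h1 : S ⊆ {a}
  · exact Or.inr (Or.inl ⟨a, Set.eq_singleton_iff_unique_mem.2 ⟨ha, fun x hx => h1 hx⟩⟩)
  · rw [Set.not_subset] at h1
    obtain ⟨b, hb, hba⟩ := h1
    rw [Set.mem_singleton_iff] at hba
    refine Or.inr (Or.inr ⟨a, b, fun hab => hba (by simp [hab]), ?_⟩)
    refine subset_antisymm ?_ (by rintro x (rfl|rfl) <;> assumption)
    by_contra hsub
    rw [Set.not_subset] at hsub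
    obtain ⟨c, hc, hcm⟩ := hsub
    simp only [Set.mem_insert_iff, Set.mem_singleton_iff, not_or] at hcm
    have h3 : ({a, b, c} : Set α) ⊆ S := by rintro x (rfl|rfl|rfl) <;> assumption
    have : 3 ≤ S.ncard := by
      have h4 := Set.ncard_le_ncard h3 hF
      rwa [Set.ncard_insert_of_notMem
          (by simp only [Set.mem_insert_iff, Set.mem_singleton_iff]; push_neg;
              exact ⟨fun h => hba h.symm, fun h => hcm.1 h.symm⟩) (Set.toFinite _),
        Set.ncard_insert_of_notMem
          (by simp only [Set.mem_singleton_iff]; exact fun h => hcm.2 h.symm) (Set.toFinite _),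
        Set.ncard_singleton] at h4
    omega

theorem emb_empty (A : Str L1 L2 V) (K : Str L1 L2 W) :
    ∃ f : (∅ : Set V) → W, (A.Induced ∅).IsEmb K f :=
  ⟨fun x => x.2.elim, fun x => x.2.elim, fun _ x => x.2.elim, fun _ x => x.2.elim⟩

theorem emb_single {A : Str L1 L2 V} {K : Str L1 L2 W} {a : V} {w : W}
    (hu : ∀ r, A.unary r a ↔ K.unary r w) (hl : ∀ r, A.rel r a a ↔ K.rel r w w) :
    ∃ f : ({a} : Set V) → W, (A.Induced {a}).IsEmb K f := by
  refine ⟨fun _ => w, fun x y _ => Subtype.ext (x.2.trans y.2.symm), fun r x => ?_, fun r x y => ?_⟩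
  · obtain ⟨x, hx⟩ := x
    rw [Set.mem_singleton_iff] at hx; subst hx
    exact hu r
  · obtain ⟨x, hx⟩ := x; obtain ⟨y, hy⟩ := y
    rw [Set.mem_singleton_iff] at hx hy; subst hx; subst hy
    exact hl r

/-- Data sufficient to embed the induced structure on a pair. -/
def PairEmbData (A : Str L1 L2 V) (K : Str L1 L2 W) (a b : V) : Prop :=
  ∃ g : Fin 2 → W, g 0 ≠ g 1 ∧
    (∀ r, A.unary r a ↔ K.unary r (g 0)) ∧ (∀ r, A.unary r b ↔ K.unary r (g 1)) ∧
    (∀ r, A.rel r a a ↔ K.rel r (g 0) (g 0)) ∧ (∀ r, A.rel r b b ↔ K.rel r (g 1) (g 1)) ∧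
    (∀ r, A.rel r a b ↔ K.rel r (g 0) (g 1)) ∧ (∀ r, A.rel r b a ↔ K.rel r (g 1) (g 0))

theorem PairEmbData.symm {A : Str L1 L2 V} {K : Str L1 L2 W} {a b : V}
    (h : PairEmbData A K a b) : PairEmbData A K b a := by
  obtain ⟨g, hg, h1, h2, h3, h4, h5, h6⟩ := h
  exact ⟨![g 1, g 0], Ne.symm hg, h2, h1, h4, h3, h6, h5⟩

theorem emb_pair {A : Str L1 L2 V} {K : Str L1 L2 W} {a b : V} (hab : a ≠ b)
    (h : PairEmbData A K a b) :
    ∃ f : ({a, b} : Set V) → W, (A.Induced {a, b}).IsEmb K f := by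
  classical
  obtain ⟨g, hg, h1, h2, h3, h4, h5, h6⟩ := h
  have hmem : ∀ x : ({a, b} : Set V), x.1 = a ∨ x.1 = b := by
    rintro ⟨x, hx | hx⟩
    · exact Or.inl hx
    · exact Or.inr hx
  set f : ({a, b} : Set V) → W := fun x => if x.1 = a then g 0 else g 1 with hf
  have hfa : ∀ x : ({a, b} : Set V), x.1 = a → f x = g 0 := fun x hx => if_pos hx
  have hfb : ∀ x : ({a, b} : Set V), x.1 = b → f x = g 1 := fun x hx =>
    if_neg (by rw [hx]; exact Ne.symm hab)
  refine ⟨f, ?_, ?_, ?_⟩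
  · intro x y hxy
    rcases hmem x with hx | hx <;> rcases hmem y with hy | hy
    · exact Subtype.ext (hx.trans hy.symm)
    · rw [hfa x hx, hfb y hy] at hxy; exact absurd hxy hg
    · rw [hfb x hx, hfa y hy] at hxy; exact absurd hxy.symm hg
    · exact Subtype.ext (hx.trans hy.symm)
  · intro r x
    rcases hmem x with hx | hx
    · rw [hfa x hx]; show A.unary r x.1 ↔ _; rw [hx]; exact h1 r
    · rw [hfb x hx]; show A.unary r x.1 ↔ _; rw [hx]; exact h2 r
  · intro r x y
    rcases hmem x with hx | hx <;> rcases hmem y with hy | hy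
    · rw [hfa x hx, hfa y hy]; show A.rel r x.1 y.1 ↔ _; rw [hx, hy]; exact h3 r
    · rw [hfa x hx, hfb y hy]; show A.rel r x.1 y.1 ↔ _; rw [hx, hy]; exact h5 r
    · rw [hfb x hx, hfa y hy]; show A.rel r x.1 y.1 ↔ _; rw [hx, hy]; exact h6 r
    · rw [hfb x hx, hfb y hy]; show A.rel r x.1 y.1 ↔ _; rw [hx, hy]; exact h4 r

/-- Build `SmallIrredEmbed _ K 2` from singleton data and pair data. -/
theorem smallIrred_build {A : Str L1 L2 V} {K : Str L1 L2 W}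
    (hsingle : ∀ a : V, ∃ w, (∀ r, A.unary r a ↔ K.unary r w) ∧
      (∀ r, A.rel r a a ↔ K.rel r w w))
    (hpair : ∀ a b : V, a ≠ b → A.Adj a b → PairEmbData A K a b) :
    A.SmallIrredEmbed K 2 := by
  intro S hF hc hI
  rcases ncard_split S hF hc with rfl | ⟨a, rfl⟩ | ⟨a, b, hne, rfl⟩
  · exact emb_empty A K
  · obtain ⟨w, hu, hl⟩ := hsingle a
    exact emb_single hu hl
  · have hadj : A.Adj a b := by
      have hxy : (⟨a, by simp⟩ : ({a, b} : Set V)) ≠ ⟨b, by simp⟩ := by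
        simp only [ne_eq, Subtype.mk.injEq]; exact hne
      obtain ⟨-, r, hr⟩ := hI ⟨a, by simp⟩ ⟨b, by simp⟩ hxy
      exact ⟨hne, r, hr⟩
    exact emb_pair hne (hpair a b hne hadj)

end Aux

section Pairs

variable {L1 L2 W : Type}

/-- The structure induced by `K` on a pair of points. -/
def pairStr (K : Str L1 L2 W) (a b : W) : Str L1 L2 (Fin 2) where
  unary r i := K.unary r (![a, b] i)
  rel r i j := K.rel r (![a, b] i) (![a, b] j)

theorem pairStr_emb (K : Str L1 L2 W) {a b : W} (hab : a ≠ b) :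
    (pairStr K a b).IsEmb K ![a, b] := by
  refine ⟨?_, fun r i => Iff.rfl, fun r i j => Iff.rfl⟩
  intro i j hij
  fin_cases i <;> fin_cases j <;> first | rfl | simp_all

/-- The pair structure as an element of the alphabet. -/
def pairSig (K : Str L1 L2 W) {a b : W} (hab : a ≠ b) : Sig K :=
  ⟨pairStr K a b, ![a, b], pairStr_emb K hab⟩

/-- The structure induced by `K` on a triple of points. -/
def triStr (K : Str L1 L2 W) (a b c : W) : Str L1 L2 (Fin 3) where
  unary r i := K.unary r (![a, b, c] i)
  rel r i j := K.rel r (![a, b, c] i) (![a, b, c] j)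

theorem triStr_emb (K : Str L1 L2 W) {a b c : W} (hab : a ≠ b) (hac : a ≠ c) (hbc : b ≠ c) :
    (triStr K a b c).IsEmb K ![a, b, c] := by
  refine ⟨?_, fun r i => Iff.rfl, fun r i j => Iff.rfl⟩
  intro i j hij
  fin_cases i <;> fin_cases j <;> first | rfl | simp_all

/-- Every letter of the alphabet carries a binary relation between its two points. -/
theorem sig_cross {K : Str L1 L2 W} (hK : K.Irred) (σ : Sig K) :
    ∃ r, σ.1.rel r 0 1 ∨ σ.1.rel r 1 0 := by
  obtain ⟨f, hf⟩ := σ.2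
  have h01 : f 0 ≠ f 1 := fun h => absurd (hf.1 h) (by decide)
  obtain ⟨-, r, hr⟩ := hK (f 0) (f 1) h01
  exact ⟨r, hr.imp (fun h => (hf.2.2 r 0 1).2 h) (fun h => (hf.2.2 r 1 0).2 h)⟩

instance strCountable [Finite L1] [Finite L2] : Countable (Str L1 L2 (Fin 2)) := by
  have hf : Function.Injective
      (fun A : Str L1 L2 (Fin 2) => (A.unary, A.rel)) := by
    intro A B h
    cases A; cases B
    simpa [Prod.ext_iff] using h
  exact hf.countable

instance gvertCountable [Finite L1] [Finite L2] {K : Str L1 L2 W} : Countable (GVert K) := by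
  unfold GVert Sig
  infer_instance

end Pairs

section GLemmas

variable {L1 L2 WK : Type} {K : Str L1 L2 WK}

/-- Consistency along a triangle witnessing (A2). -/
theorem gtri_consist {U V : GVert K} {h : U.1.length < V.1.length} (hG : GTri K U V h)
    {i : ℕ} (hi : i < U.1.length) :
    (∀ r, (V.1.get ⟨U.1.length, h⟩).1.unary r 0 ↔ (U.1.get ⟨i, hi⟩).1.unary r 1) ∧
    (∀ r, (V.1.get ⟨U.1.length, h⟩).1.rel r 0 0 ↔ (U.1.get ⟨i, hi⟩).1.rel r 1 1) ∧
    (∀ r, (V.1.get ⟨i, hi.trans h⟩).1.unary r 0 ↔ (U.1.get ⟨i, hi⟩).1.unary r 0) ∧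
    (∀ r, (V.1.get ⟨i, hi.trans h⟩).1.rel r 0 0 ↔ (U.1.get ⟨i, hi⟩).1.rel r 0 0) := by
  obtain ⟨D, ⟨hA, hB, hC⟩, f, hf⟩ := hG i hi
  have e01 : (![0, 1] : Fin 2 → Fin 3) 0 = 0 := rfl
  have e11 : (![0, 1] : Fin 2 → Fin 3) 1 = 1 := rfl
  have e02 : (![1, 2] : Fin 2 → Fin 3) 0 = 1 := rfl
  have e03 : (![0, 2] : Fin 2 → Fin 3) 0 = 0 := rfl
  refine ⟨fun r => ?_, fun r => ?_, fun r => ?_, fun r => ?_⟩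
  · have hb := hB.2.1 r 0
    rw [e02] at hb
    have ha := hA.2.1 r 1
    rw [e11] at ha
    exact hb.trans ha.symm
  · have hb := hB.2.2 r 0 0
    rw [e02] at hb
    have ha := hA.2.2 r 1 1
    rw [e11] at ha
    exact hb.trans ha.symm
  · have hc := hC.2.1 r 0
    rw [e03] at hc
    have ha := hA.2.1 r 0
    rw [e01] at ha
    exact hc.trans ha.symm
  · have hc := hC.2.2 r 0 0
    rw [e03] at hc
    have ha := hA.2.2 r 0 0
    rw [e01] at ha
    exact hc.trans ha.symm

/-- Adjacent vertices of `G` have different lengths. -/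
theorem g_adj_len_ne {U V : GVert K} (h : (Gstr K).Adj U V) : U.1.length ≠ V.1.length := by
  obtain ⟨hne, r, hr | hr⟩ := h
  · rcases hr with ⟨h', -⟩ | ⟨h', -⟩ | ⟨hUV, -⟩
    · omega
    · omega
    · exact absurd hUV hne
  · rcases hr with ⟨h', -⟩ | ⟨h', -⟩ | ⟨hUV, -⟩
    · omega
    · omega
    · exact absurd hUV.symm hne

/-- A witness for a vertex of `G`. -/
def HasWit (U : GVert K) : Prop :=
  (∃ V h, GTri K U V h) ∨ (∃ V h, GTri K V U h)

theorem g_unary_iff {U : GVert K} (hW : HasWit U) (h0 : 0 < U.1.length) (r : L1) :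
    (Gstr K).unary r U ↔ (U.1.get ⟨0, h0⟩).1.unary r 1 := by
  constructor
  · rintro (⟨V, h, hG, hu⟩ | ⟨V, h, hG, hu⟩)
    · exact ((gtri_consist hG h0).1 r).1 hu
    · exact ((U.2.2 V.1.length 0 h h0).1 r).1 hu
  · intro hu
    rcases hW with ⟨V, h, hG⟩ | ⟨V, h, hG⟩
    · exact Or.inl ⟨V, h, hG, ((gtri_consist hG h0).1 r).2 hu⟩
    · exact Or.inr ⟨V, h, hG, ((U.2.2 V.1.length 0 h h0).1 r).2 hu⟩

theorem g_loop_iff {U : GVert K} (hW : HasWit U) (h0 : 0 < U.1.length) (r : L2) :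
    (Gstr K).rel r U U ↔ (U.1.get ⟨0, h0⟩).1.rel r 1 1 := by
  constructor
  · rintro (⟨h, -⟩ | ⟨h, -⟩ | ⟨-, ⟨V, h, hG, hu⟩ | ⟨V, h, hG, hu⟩⟩)
    · omega
    · omega
    · exact ((gtri_consist hG h0).2.1 r).1 hu
    · exact ((U.2.2 V.1.length 0 h h0).2 r).1 hu
  · intro hu
    rcases hW with ⟨V, h, hG⟩ | ⟨V, h, hG⟩
    · exact Or.inr (Or.inr ⟨rfl, Or.inl ⟨V, h, hG, ((gtri_consist hG h0).2.1 r).2 hu⟩⟩)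
    · exact Or.inr (Or.inr ⟨rfl, Or.inr ⟨V, h, hG, ((U.2.2 V.1.length 0 h h0).2 r).2 hu⟩⟩)

theorem gvert_pos (U : GVert K) : 0 < U.1.length := List.length_pos_iff.2 U.2.1

end GLemmas

section GPair

variable {L1 L2 WK : Type} {K : Str L1 L2 WK}

theorem g_rel_iff_UV {U V : GVert K} (h : U.1.length < V.1.length) (hG : GTri K U V h) (r : L2) :
    (Gstr K).rel r U V ↔ (V.1.get ⟨U.1.length, h⟩).1.rel r 0 1 := by
  constructor
  · rintro (⟨h', -, hr⟩ | ⟨h', -⟩ | ⟨hUV, -⟩)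
    · exact hr
    · omega
    · exact absurd (congrArg (fun X : GVert K => X.1.length) hUV) (by simpa using Nat.ne_of_lt h)
  · intro hr
    exact Or.inl ⟨h, hG, hr⟩

theorem g_rel_iff_VU {U V : GVert K} (h : U.1.length < V.1.length) (hG : GTri K U V h) (r : L2) :
    (Gstr K).rel r V U ↔ (V.1.get ⟨U.1.length, h⟩).1.rel r 1 0 := by
  constructor
  · rintro (⟨h', -⟩ | ⟨h', -, hr⟩ | ⟨hUV, -⟩)
    · omega
    · exact hr
    · exact absurd (congrArg (fun X : GVert K => X.1.length) hUV) (by simpa using (Nat.ne_of_lt h).symm)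
  · intro hr
    exact Or.inr (Or.inl ⟨h, hG, hr⟩)

theorem g_unary_iff_U {U V : GVert K} (h : U.1.length < V.1.length) (hG : GTri K U V h) (r : L1) :
    (Gstr K).unary r U ↔ (V.1.get ⟨U.1.length, h⟩).1.unary r 0 :=
  (g_unary_iff (Or.inl ⟨V, h, hG⟩) (gvert_pos U) r).trans
    ((gtri_consist hG (gvert_pos U)).1 r).symm

theorem g_loop_iff_U {U V : GVert K} (h : U.1.length < V.1.length) (hG : GTri K U V h) (r : L2) :
    (Gstr K).rel r U U ↔ (V.1.get ⟨U.1.length, h⟩).1.rel r 0 0 :=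
  (g_loop_iff (Or.inl ⟨V, h, hG⟩) (gvert_pos U) r).trans
    ((gtri_consist hG (gvert_pos U)).2.1 r).symm

theorem g_unary_iff_V {U V : GVert K} (h : U.1.length < V.1.length) (hG : GTri K U V h) (r : L1) :
    (Gstr K).unary r V ↔ (V.1.get ⟨U.1.length, h⟩).1.unary r 1 :=
  (g_unary_iff (Or.inr ⟨U, h, hG⟩) (gvert_pos V) r).trans
    ((V.2.2 0 U.1.length (gvert_pos V) h).1 r)

theorem g_loop_iff_V {U V : GVert K} (h : U.1.length < V.1.length) (hG : GTri K U V h) (r : L2) :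
    (Gstr K).rel r V V ↔ (V.1.get ⟨U.1.length, h⟩).1.rel r 1 1 :=
  (g_loop_iff (Or.inr ⟨U, h, hG⟩) (gvert_pos V) r).trans
    ((V.2.2 0 U.1.length (gvert_pos V) h).2 r)

/-- An edge of `G` gives pair-embedding data. -/
theorem g_pair_data {U V : GVert K} (h : U.1.length < V.1.length) (hG : GTri K U V h) :
    PairEmbData (Gstr K) K U V := by
  obtain ⟨g, hg⟩ := (V.1.get ⟨U.1.length, h⟩).2
  refine ⟨g, fun he => absurd (hg.1 he) (by decide), ?_, ?_, ?_, ?_, ?_, ?_⟩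
  · exact fun r => (g_unary_iff_U h hG r).trans (hg.2.1 r 0)
  · exact fun r => (g_unary_iff_V h hG r).trans (hg.2.1 r 1)
  · exact fun r => (g_loop_iff_U h hG r).trans (hg.2.2 r 0 0)
  · exact fun r => (g_loop_iff_V h hG r).trans (hg.2.2 r 1 1)
  · exact fun r => (g_rel_iff_UV h hG r).trans (hg.2.2 r 0 1)
  · exact fun r => (g_rel_iff_VU h hG r).trans (hg.2.2 r 1 0)

/-- From adjacency in `G`, extract an ordered edge with its (A2) data. -/
theorem g_adj_extract {U V : GVert K} (hadj : (Gstr K).Adj U V) :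
    (∃ h : U.1.length < V.1.length, GTri K U V h) ∨
    (∃ h : V.1.length < U.1.length, GTri K V U h) := by
  obtain ⟨hne, r, hr | hr⟩ := hadj
  · rcases hr with ⟨h', hG, -⟩ | ⟨h', hG, -⟩ | ⟨hUV, -⟩
    · exact Or.inl ⟨h', hG⟩
    · exact Or.inr ⟨h', hG⟩
    · exact absurd hUV hne
  · rcases hr with ⟨h', hG, -⟩ | ⟨h', hG, -⟩ | ⟨hUV, -⟩
    · exact Or.inr ⟨h', hG⟩
    · exact Or.inl ⟨h', hG⟩
    · exact absurd hUV.symm hne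

end GPair

section Extract

variable {L1 L2 V W : Type}

theorem irred_singleton (A : Str L1 L2 V) (a : V) : (A.Induced {a}).Irred :=
  fun x y hxy => absurd (Subtype.ext (x.2.trans y.2.symm)) hxy

theorem irred_pair_of_adj (A : Str L1 L2 V) {a b : V} (h : A.Adj a b) :
    (A.Induced {a, b}).Irred := by
  intro x y hxy
  have hmem : ∀ z : ({a, b} : Set V), z.1 = a ∨ z.1 = b := by
    rintro ⟨z, hz | hz⟩
    · exact Or.inl hz
    · exact Or.inr hz
  have hxy1 : x.1 ≠ y.1 := fun he => hxy (Subtype.ext he)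
  rcases hmem x with hx | hx <;> rcases hmem y with hy | hy
  · exact absurd (hx.trans hy.symm) hxy1
  · exact ⟨hxy, by show ∃ r, A.rel r x.1 y.1 ∨ A.rel r y.1 x.1; rw [hx, hy]; exact h.2⟩
  · exact ⟨hxy, by show ∃ r, A.rel r x.1 y.1 ∨ A.rel r y.1 x.1; rw [hx, hy]; exact h.symm.2⟩
  · exact absurd (hx.trans hy.symm) hxy1

theorem single_extract {A : Str L1 L2 V} {K : Str L1 L2 W} {a : V}
    {f : ({a} : Set V) → W} (hE : (A.Induced {a}).IsEmb K f) :
    (∀ r, A.unary r a ↔ K.unary r (f ⟨a, rfl⟩)) ∧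
    (∀ r, A.rel r a a ↔ K.rel r (f ⟨a, rfl⟩) (f ⟨a, rfl⟩)) :=
  ⟨fun r => hE.2.1 r ⟨a, rfl⟩, fun r => hE.2.2 r ⟨a, rfl⟩ ⟨a, rfl⟩⟩

theorem pair_extract {A : Str L1 L2 V} {K : Str L1 L2 W} {a b : V} (hab : a ≠ b)
    {f : ({a, b} : Set V) → W} (hE : (A.Induced {a, b}).IsEmb K f) :
    f ⟨a, by simp⟩ ≠ f ⟨b, by simp⟩ ∧
    (∀ r, A.unary r a ↔ K.unary r (f ⟨a, by simp⟩)) ∧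
    (∀ r, A.unary r b ↔ K.unary r (f ⟨b, by simp⟩)) ∧
    (∀ r, A.rel r a a ↔ K.rel r (f ⟨a, by simp⟩) (f ⟨a, by simp⟩)) ∧
    (∀ r, A.rel r b b ↔ K.rel r (f ⟨b, by simp⟩) (f ⟨b, by simp⟩)) ∧
    (∀ r, A.rel r a b ↔ K.rel r (f ⟨a, by simp⟩) (f ⟨b, by simp⟩)) ∧
    (∀ r, A.rel r b a ↔ K.rel r (f ⟨b, by simp⟩) (f ⟨a, by simp⟩)) := by
  have xa : ({a, b} : Set V) := ⟨a, by simp⟩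
  refine ⟨fun he => hab ?_,
    fun r => hE.2.1 r ⟨a, by simp⟩, fun r => hE.2.1 r ⟨b, by simp⟩,
    fun r => hE.2.2 r ⟨a, by simp⟩ ⟨a, by simp⟩, fun r => hE.2.2 r ⟨b, by simp⟩ ⟨b, by simp⟩,
    fun r => hE.2.2 r ⟨a, by simp⟩ ⟨b, by simp⟩, fun r => hE.2.2 r ⟨b, by simp⟩ ⟨a, by simp⟩⟩
  exact congrArg Subtype.val (hE.1 he)

end Extract

section Witness

variable {L1 L2 WK : Type} {K : Str L1 L2 WK}

/-- The path gadget used to produce a witness for a word of length at least two. -/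
def wstr (σ0 σ1 : Str L1 L2 (Fin 2)) : Str L1 L2 (Fin 3) where
  unary r x :=
    match x with
    | 0 => σ0.unary r 0
    | 1 => σ1.unary r 0
    | 2 => σ0.unary r 1
  rel r x y :=
    match x, y with
    | 0, 0 => σ0.rel r 0 0
    | 1, 1 => σ1.rel r 0 0
    | 2, 2 => σ0.rel r 1 1
    | 0, 2 => σ0.rel r 0 1
    | 2, 0 => σ0.rel r 1 0
    | 1, 2 => σ1.rel r 0 1
    | 2, 1 => σ1.rel r 1 0
    | _, _ => False

theorem fin3_cases : ∀ z : Fin 3, z = 0 ∨ z = 1 ∨ z = 2 := by decide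

theorem wstr_cycles (σ0 σ1 : Str L1 L2 (Fin 2)) (K : Str L1 L2 WK) :
    (wstr σ0 σ1).CycleCompletes K := by
  intro ℓ w hw
  exfalso
  obtain ⟨⟨hl3, hinj, hadj⟩, -⟩ := hw
  haveI : NeZero ℓ := ⟨by omega⟩
  have hcard : ℓ ≤ 3 := by
    have := Fintype.card_le_of_injective w hinj
    simpa [ZMod.card] using this
  have hl : ℓ = 3 := le_antisymm hcard hl3
  subst hl
  have hz3 := fin3_cases
  have hno : ∀ i : ZMod 3, ¬ ((w i = 0 ∧ w (i+1) = 1) ∨ (w i = 1 ∧ w (i+1) = 0)) := by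
    rintro i (⟨h0, h1⟩ | ⟨h0, h1⟩) <;>
    · obtain ⟨-, r, hr | hr⟩ := hadj i
      all_goals rw [h0, h1] at hr; exact (hr : False)
  obtain ⟨i, hi⟩ := (Finite.surjective_of_injective hinj) 0
  have hne1 : w (i+1) ≠ 0 := by
    intro h
    have := hinj (h.trans hi.symm)
    have h2 := congrArg (fun z => z - i) this
    simp only [add_sub_cancel_left, sub_self] at h2
    exact absurd h2 (by decide)
  rcases hz3 (w (i+1)) with h | h | h
  · exact hne1 h
  · exact hno i (Or.inl ⟨hi, h⟩)
  · have hne2 : w (i+1+1) ≠ 0 := by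
      intro h0
      have := hinj (h0.trans hi.symm)
      have h2 := congrArg (fun z => z - i) this
      simp only [add_sub_cancel_left, sub_self, add_assoc] at h2
      exact absurd h2 (by decide)
    have hne3 : w (i+1+1) ≠ 2 := by
      intro h0
      have := hinj (h0.trans h.symm)
      have h2 := congrArg (fun z => z - (i+1)) this
      simp only [add_sub_cancel_left, sub_self] at h2
      exact absurd h2 (by decide)
    rcases hz3 (w (i+1+1)) with h0 | h0 | h0
    · exact hne2 h0
    · refine hno (i+1+1) (Or.inr ⟨h0, ?_⟩)
      have : i + 1 + 1 + 1 = i := by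
        have h3 : (1 + 1 + 1 : ZMod 3) = 0 := by decide
        rw [add_assoc, add_assoc, ← add_assoc (1 : ZMod 3), h3, add_zero]
      rw [this, hi]; rfl
    · exact hne3 h0

theorem wstr_small {σ0 σ1 : Str L1 L2 (Fin 2)} {g0 g1 : Fin 2 → WK}
    (hs0 : σ0.IsEmb K g0) (hs1 : σ1.IsEmb K g1)
    (hA1u : ∀ r, σ0.unary r 1 ↔ σ1.unary r 1) (hA1l : ∀ r, σ0.rel r 1 1 ↔ σ1.rel r 1 1) :
    (wstr σ0 σ1).SmallIrredEmbed K 2 := by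
  have hg0 : g0 0 ≠ g0 1 := fun h => absurd (hs0.1 h) (by decide)
  have hg1 : g1 0 ≠ g1 1 := fun h => absurd (hs1.1 h) (by decide)
  refine smallIrred_build ?_ ?_
  · intro a
    match a with
    | 0 => exact ⟨g0 0, fun r => hs0.2.1 r 0, fun r => hs0.2.2 r 0 0⟩
    | 1 => exact ⟨g1 0, fun r => hs1.2.1 r 0, fun r => hs1.2.2 r 0 0⟩
    | 2 => exact ⟨g0 1, fun r => hs0.2.1 r 1, fun r => hs0.2.2 r 1 1⟩
  · intro a b hne hadj
    match a, b with
    | 0, 0 => exact absurd rfl hne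
    | 1, 1 => exact absurd rfl hne
    | 2, 2 => exact absurd rfl hne
    | 0, 1 => obtain ⟨-, r, hr | hr⟩ := hadj <;> exact (hr : False).elim
    | 1, 0 => obtain ⟨-, r, hr | hr⟩ := hadj <;> exact (hr : False).elim
    | 0, 2 =>
      exact ⟨g0, hg0, fun r => hs0.2.1 r 0, fun r => hs0.2.1 r 1, fun r => hs0.2.2 r 0 0,
        fun r => hs0.2.2 r 1 1, fun r => hs0.2.2 r 0 1, fun r => hs0.2.2 r 1 0⟩
    | 2, 0 =>
      exact PairEmbData.symm ⟨g0, hg0, fun r => hs0.2.1 r 0, fun r => hs0.2.1 r 1,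
        fun r => hs0.2.2 r 0 0, fun r => hs0.2.2 r 1 1, fun r => hs0.2.2 r 0 1,
        fun r => hs0.2.2 r 1 0⟩
    | 1, 2 =>
      refine ⟨g1, hg1, fun r => hs1.2.1 r 0, fun r => ?_, fun r => hs1.2.2 r 0 0,
        fun r => ?_, fun r => hs1.2.2 r 0 1, fun r => hs1.2.2 r 1 0⟩
      · exact (hA1u r).trans (hs1.2.1 r 1)
      · exact (hA1l r).trans (hs1.2.2 r 1 1)
    | 2, 1 =>
      refine PairEmbData.symm ⟨g1, hg1, fun r => hs1.2.1 r 0, fun r => ?_,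
        fun r => hs1.2.2 r 0 0, fun r => ?_, fun r => hs1.2.2 r 0 1, fun r => hs1.2.2 r 1 0⟩
      · exact (hA1u r).trans (hs1.2.1 r 1)
      · exact (hA1l r).trans (hs1.2.2 r 1 1)

end Witness

section WitnessMain

variable {L1 L2 WK : Type} {K : Str L1 L2 WK}

theorem exists_wit [Infinite WK] (hK : K.Irred) (hyp : CompletionHyp K) (U : GVert K) :
    HasWit U := by
  classical
  have h0 : 0 < U.1.length := gvert_pos U
  rcases Nat.lt_or_ge U.1.length 2 with h2 | h2
  -- `U` has length one: extend it directly inside `K`.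
  · have h1 : U.1.length = 1 := by omega
    obtain ⟨g, hg⟩ := (U.1.get ⟨0, h0⟩).2
    have hxy : g 0 ≠ g 1 := fun h => absurd (hg.1 h) (by decide)
    obtain ⟨z, hz⟩ := Infinite.exists_notMem_finset ({g 0, g 1} : Finset WK)
    simp only [Finset.mem_insert, Finset.mem_singleton, not_or] at hz
    have hxz : g 0 ≠ z := fun h => hz.1 h.symm
    have hyz : g 1 ≠ z := fun h => hz.2 h.symm
    refine Or.inl ⟨⟨[pairSig K hxz, pairSig K hyz], by simp, ?_⟩, ?_, ?_⟩
    · intro i j hi hj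
      have hi' : i = 0 ∨ i = 1 := by simp at hi; omega
      have hj' : j = 0 ∨ j = 1 := by simp at hj; omega
      rcases hi' with rfl | rfl <;> rcases hj' with rfl | rfl <;>
        exact ⟨fun r => Iff.rfl, fun r => Iff.rfl⟩
    · show U.1.length < 2
      omega
    · intro i hi
      have hi0 : i = 0 := by omega
      subst hi0
      have hfe : (⟨U.1.length, by show U.1.length < 2; omega⟩ : Fin 2) = ⟨1, by omega⟩ :=
        Fin.ext h1
      refine ⟨triStr K (g 0) (g 1) z, ⟨?_, ?_, ?_⟩, ![g 0, g 1, z], triStr_emb K hxy hxz hyz⟩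
      · refine ⟨by decide, fun r i => ?_, fun r i j => ?_⟩
        · fin_cases i
          · exact hg.2.1 r 0
          · exact hg.2.1 r 1
        · fin_cases i <;> fin_cases j
          · exact hg.2.2 r 0 0
          · exact hg.2.2 r 0 1
          · exact hg.2.2 r 1 0
          · exact hg.2.2 r 1 1
      · show (([pairSig K hxz, pairSig K hyz].get ⟨U.1.length, _⟩).1).IsEmb _ ![1, 2]
        rw [hfe]
        exact ⟨by decide, fun r i => by fin_cases i <;> exact Iff.rfl,
          fun r i j => by fin_cases i <;> fin_cases j <;> exact Iff.rfl⟩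
      · exact ⟨by decide, fun r i => by fin_cases i <;> exact Iff.rfl,
          fun r i j => by fin_cases i <;> fin_cases j <;> exact Iff.rfl⟩
  -- `U` has length at least two: use the path gadget and the completion hypothesis.
  · have hlt1 : 1 < U.1.length := h2
    set σ0 := U.1.get ⟨0, h0⟩ with hσ0
    set σ1 := U.1.get ⟨1, hlt1⟩ with hσ1
    obtain ⟨g0, hg0⟩ := σ0.2
    obtain ⟨g1, hg1⟩ := σ1.2
    have hA1 := U.2.2 0 1 h0 hlt1
    obtain ⟨cP, hKi, hcinj, hhom, hirr⟩ :=
      hyp (Fin 3) (wstr σ0.1 σ1.1) (wstr_cycles σ0.1 σ1.1 K)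
        (wstr_small hg0 hg1 hA1.1 hA1.2)
    have adj02 : (wstr σ0.1 σ1.1).Adj 0 2 := by
      obtain ⟨r, hr⟩ := sig_cross hK σ0
      exact ⟨by decide, r, hr⟩
    have adj12 : (wstr σ0.1 σ1.1).Adj 1 2 := by
      obtain ⟨r, hr⟩ := sig_cross hK σ1
      exact ⟨by decide, r, hr⟩
    have E02 := pair_extract (show (0 : Fin 3) ≠ 2 by decide)
      (hirr {0, 2} (irred_pair_of_adj _ adj02))
    have E12 := pair_extract (show (1 : Fin 3) ≠ 2 by decide)
      (hirr {1, 2} (irred_pair_of_adj _ adj12))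
    obtain ⟨hne02, u0, u2, l00, l22, l02, l20⟩ := E02
    obtain ⟨hne12, u1, u2', l11, l22', l12, l21⟩ := E12
    have hA01 : cP 0 ≠ cP 1 := fun h => absurd (hcinj h) (by decide)
    have hA02 : cP 0 ≠ cP 2 := fun h => absurd (hcinj h) (by decide)
    have hA12 : cP 1 ≠ cP 2 := fun h => absurd (hcinj h) (by decide)
    refine Or.inr ⟨⟨[pairSig K hA01], by simp, ?_⟩, ?_, ?_⟩
    · intro i j hi hj
      have hi' : i = 0 := by simp at hi; omega
      have hj' : j = 0 := by simp at hj; omega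
      subst hi'; subst hj'
      exact ⟨fun r => Iff.rfl, fun r => Iff.rfl⟩
    · show 1 < U.1.length
      omega
    · intro i hi
      have hi0 : i = 0 := by
        simp only [List.length_singleton] at hi
        omega
      subst hi0
      refine ⟨triStr K (cP 0) (cP 1) (cP 2), ⟨?_, ?_, ?_⟩, ![cP 0, cP 1, cP 2],
        triStr_emb K hA01 hA02 hA12⟩
      · exact ⟨by decide, fun r i => by fin_cases i <;> exact Iff.rfl,
          fun r i j => by fin_cases i <;> fin_cases j <;> exact Iff.rfl⟩
      · refine ⟨by decide, fun r i => ?_, fun r i j => ?_⟩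
        · fin_cases i
          · exact u1 r
          · exact ((hA1.1 r).symm.trans (u2' r))
        · fin_cases i <;> fin_cases j
          · exact l11 r
          · exact l12 r
          · exact l21 r
          · exact ((hA1.2 r).symm.trans (l22' r))
      · refine ⟨by decide, fun r i => ?_, fun r i j => ?_⟩
        · fin_cases i
          · exact u0 r
          · exact u2 r
        · fin_cases i <;> fin_cases j
          · exact l00 r
          · exact l02 r
          · exact l20 r
          · exact l22 r

theorem g_single_data [Infinite WK] (hK : K.Irred) (hyp : CompletionHyp K) (U : GVert K) :
    ∃ w, (∀ r, (Gstr K).unary r U ↔ K.unary r w) ∧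
      (∀ r, (Gstr K).rel r U U ↔ K.rel r w w) := by
  have hW := exists_wit hK hyp U
  obtain ⟨g, hg⟩ := (U.1.get ⟨0, gvert_pos U⟩).2
  exact ⟨g 1, fun r => (g_unary_iff hW (gvert_pos U) r).trans (hg.2.1 r 1),
    fun r => (g_loop_iff hW (gvert_pos U) r).trans (hg.2.2 r 1 1)⟩

theorem g_small [Infinite WK] (hK : K.Irred) (hyp : CompletionHyp K) :
    (Gstr K).SmallIrredEmbed K 2 := by
  refine smallIrred_build (g_single_data hK hyp) ?_
  intro a b _ hadj
  rcases g_adj_extract hadj with ⟨h, hG⟩ | ⟨h, hG⟩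
  · exact g_pair_data h hG
  · exact (g_pair_data h hG).symm

end WitnessMain

section RelStr

variable {L1 L2 V WK : Type}

theorem zmod_shift_ne {ℓ : ℕ} (hℓ : 3 ≤ ℓ) (i : ZMod ℓ) (k : ℕ) (h0 : 0 < k) (hk : k < ℓ) :
    i + (k : ZMod ℓ) ≠ i := by
  haveI : NeZero ℓ := ⟨by omega⟩
  intro h
  have h2 : (k : ZMod ℓ) = 0 := by
    have h3 := congrArg (fun z => z - i) h
    simpa [add_comm i, add_sub_cancel_right] using h3
  rw [ZMod.natCast_eq_zero_iff] at h2
  have := Nat.le_of_dvd h0 h2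
  omega

/-- If the two cyclic neighbours of a vertex on an induced cycle are adjacent,
the cycle is a triangle. -/
theorem induced_cycle_three {A : Str L1 L2 V} {ℓ : ℕ} {w : ZMod ℓ → V}
    (hc : A.IsInducedCycle ℓ w) (i : ZMod ℓ) (hAdj : A.Adj (w (i - 1)) (w (i + 1))) :
    ℓ = 3 := by
  by_contra h3
  have hℓ : 3 ≤ ℓ := hc.1.1
  have hℓ4 : 4 ≤ ℓ := by omega
  have c2 : ((2 : ℕ) : ZMod ℓ) = 1 + 1 := by push_cast; ring
  have c3 : ((3 : ℕ) : ZMod ℓ) = 1 + 1 + 1 := by push_cast; ring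
  refine hc.2 (i - 1) (i + 1) ?_ ?_ ?_ hAdj
  · intro he
    refine zmod_shift_ne hℓ (i - 1) 2 (by omega) (by omega) ?_
    push_cast
    linear_combination -he
  · intro he
    refine zmod_shift_ne hℓ i 1 (by omega) (by omega) ?_
    push_cast
    linear_combination he
  · intro he
    refine zmod_shift_ne hℓ (i - 1) 3 (by omega) (by omega) ?_
    push_cast
    linear_combination -he

/-- Structure pulled back from `K` along `vmap`, with relations restricted by `side`. -/
def relStr (K : Str L1 L2 WK) (vmap : V → WK) (side : V → V → Prop) : Str L1 L2 V where
  unary r x := K.unary r (vmap x)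
  rel r x y := K.rel r (vmap x) (vmap y) ∧ (x = y ∨ side x y)

theorem relStr_clique_emb (K : Str L1 L2 WK) (vmap : V → WK) (side : V → V → Prop) (S : Set V)
    (hS : ∀ x y : V, x ∈ S → y ∈ S → x ≠ y → side x y)
    (hinj : ∀ x y : V, x ∈ S → y ∈ S → x ≠ y → vmap x ≠ vmap y) :
    ((relStr K vmap side).Induced S).IsEmb K (fun x => vmap x.1) := by
  refine ⟨?_, fun r x => Iff.rfl, fun r x y => ?_⟩
  · intro x y h
    by_contra hne
    exact hinj x.1 y.1 x.2 y.2 (fun he => hne (Subtype.ext he)) h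
  · constructor
    · exact fun h => h.1
    · intro h
      refine ⟨h, ?_⟩
      by_cases hxy : x.1 = y.1
      · exact Or.inl hxy
      · exact Or.inr (hS x.1 y.1 x.2 y.2 hxy)

theorem relStr_small (K : Str L1 L2 WK) (vmap : V → WK) (side : V → V → Prop)
    (hsym : ∀ x y, side x y → side y x)
    (hsideinj : ∀ x y, side x y → vmap x ≠ vmap y) :
    (relStr K vmap side).SmallIrredEmbed K 2 := by
  refine smallIrred_build ?_ ?_
  · exact fun a => ⟨vmap a, fun r => Iff.rfl,
      fun r => ⟨fun h => h.1, fun h => ⟨h, Or.inl rfl⟩⟩⟩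
  · intro a b hne hadj
    have hside : side a b := by
      obtain ⟨-, r, hr | hr⟩ := hadj
      · exact hr.2.resolve_left hne
      · exact hsym _ _ (hr.2.resolve_left (Ne.symm hne))
    refine ⟨![vmap a, vmap b], hsideinj _ _ hside,
      fun r => Iff.rfl, fun r => Iff.rfl,
      fun r => ⟨fun h => h.1, fun h => ⟨h, Or.inl rfl⟩⟩,
      fun r => ⟨fun h => h.1, fun h => ⟨h, Or.inl rfl⟩⟩,
      fun r => ⟨fun h => h.1, fun h => ⟨h, Or.inr hside⟩⟩,
      fun r => ⟨fun h => h.1, fun h => ⟨h, Or.inr (hsym _ _ hside)⟩⟩⟩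

theorem relStr_cycles (K : Str L1 L2 WK) (vmap : V → WK) (side : V → V → Prop)
    (hK : K.Irred)
    (hsym : ∀ x y, side x y → side y x)
    (hsideinj : ∀ x y, side x y → vmap x ≠ vmap y)
    (hthree : ∀ (ℓ : ℕ) (w : ZMod ℓ → V),
      (relStr K vmap side).IsInducedCycle ℓ w → ℓ = 3) :
    (relStr K vmap side).CycleCompletes K := by
  intro ℓ w hw
  have h3 := hthree ℓ w hw
  subst h3
  have hz : ∀ a b : ZMod 3, a = b ∨ b = a + 1 ∨ a = b + 1 := by decide
  have hadjall : ∀ x y : V, x ∈ Set.range w → y ∈ Set.range w → x ≠ y →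
      (relStr K vmap side).Adj x y := by
    rintro x y ⟨a, rfl⟩ ⟨b, rfl⟩ hne
    rcases hz a b with he | he | he
    · exact absurd (congrArg w he) hne
    · rw [he]; exact hw.1.2.2 a
    · rw [he]; exact (hw.1.2.2 b).symm
  have hS : ∀ x y : V, x ∈ Set.range w → y ∈ Set.range w → x ≠ y → side x y := by
    intro x y hx hy hne
    obtain ⟨-, r, hr | hr⟩ := hadjall x y hx hy hne
    · exact hr.2.resolve_left hne
    · exact hsym _ _ (hr.2.resolve_left (Ne.symm hne))
  exact ⟨fun x => vmap x.1, completion_of_emb hK (relStr_clique_emb K vmap side _ hS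
    (fun x y hx hy hne => hsideinj x y (hS x y hx hy hne)))⟩

theorem zmod_val_succ {ℓ : ℕ} [NeZero ℓ] {u : ZMod ℓ} (h : u + 1 ≠ 0) :
    (u + 1).val = u.val + 1 := by
  have hu : ((u.val : ℕ) : ZMod ℓ) = u := ZMod.natCast_rightInverse u
  have hlt := ZMod.val_lt u
  rcases Nat.lt_or_ge (u.val + 1) ℓ with hc | hc
  · have he : (u + 1 : ZMod ℓ) = ((u.val + 1 : ℕ) : ZMod ℓ) := by
      rw [Nat.cast_add, Nat.cast_one, hu]
    rw [he, ZMod.val_cast_of_lt hc]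
  · exfalso
    have he : u.val + 1 = ℓ := by omega
    apply h
    rw [← hu, ← Nat.cast_one, ← Nat.cast_add, he, ZMod.natCast_self]

end RelStr

section GammaDef

variable {L1 L2 V W WK : Type}

theorem range_fin3 {α : Type _} (x y z : α) :
    Set.range (![x, y, z] : Fin 3 → α) = {x, y, z} := by
  ext t
  constructor
  · rintro ⟨i, rfl⟩
    fin_cases i <;> simp
  · rintro (rfl | rfl | rfl)
    · exact ⟨0, rfl⟩
    · exact ⟨1, rfl⟩
    · exact ⟨2, rfl⟩

/-- Transport an embedding along an enumeration of a 3-element set. -/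
theorem emb_of_tri_emb {A : Str L1 L2 V} {K : Str L1 L2 W} {D : Str L1 L2 (Fin 3)}
    {m : Fin 3 → V} (hm : Function.Injective m)
    (hu : ∀ r i, A.unary r (m i) ↔ D.unary r i)
    (hr : ∀ r i j, A.rel r (m i) (m j) ↔ D.rel r i j)
    {g : Fin 3 → W} (hD : D.IsEmb K g) :
    ∃ f : Set.range m → W, (A.Induced (Set.range m)).IsEmb K f := by
  classical
  have hidx : ∀ x : Set.range m, ∃ i, m i = x.1 := fun x => x.2
  choose idx hidx using hidx
  refine ⟨fun x => g (idx x), ?_, fun r x => ?_, fun r x y => ?_⟩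
  · intro x y hxy
    refine Subtype.ext ?_
    rw [← hidx x, ← hidx y]
    exact congrArg m (hD.1 hxy)
  · show A.unary r x.1 ↔ _
    rw [← hidx x]
    exact (hu r (idx x)).trans (hD.2.1 r (idx x))
  · show A.rel r x.1 y.1 ↔ _
    rw [← hidx x, ← hidx y]
    exact (hr r (idx x) (idx y)).trans (hD.2.2 r (idx x) (idx y))

/-- The auxiliary structure `Γ`: a fresh base vertex `none` joined to all non-minimal
vertices of the cycle by the letters at position `n0`. -/
def gammaStr (K : Str L1 L2 WK) {ℓ : ℕ} (v : ZMod ℓ → GVert K) (n0 : ℕ) (j0 : ZMod ℓ)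
    (hlt : ∀ j : {j : ZMod ℓ // (v j).1.length ≠ n0}, n0 < (v j.1).1.length) :
    Str L1 L2 (Option {j : ZMod ℓ // (v j).1.length ≠ n0}) where
  unary r x := (Gstr K).unary r (v (x.elim j0 Subtype.val))
  rel r x y :=
    match x, y with
    | none, none => (Gstr K).rel r (v j0) (v j0)
    | none, some j => ((v j.1).1.get ⟨n0, hlt j⟩).1.rel r 0 1
    | some j, none => ((v j.1).1.get ⟨n0, hlt j⟩).1.rel r 1 0
    | some j, some j' => (Gstr K).rel r (v j.1) (v j'.1)

variable {K : Str L1 L2 WK} {ℓ : ℕ} {v : ZMod ℓ → GVert K} {n0 : ℕ} {j0 : ZMod ℓ}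
  {hlt : ∀ j : {j : ZMod ℓ // (v j).1.length ≠ n0}, n0 < (v j.1).1.length}

/-- The triangles of `Γ` over an edge of the cycle embed into `K`. -/
theorem gamma_tri_emb
    (hθu : ∀ (j : ZMod ℓ) (h : n0 < (v j).1.length) (r : L1),
      ((v j).1.get ⟨n0, h⟩).1.unary r 0 ↔ (Gstr K).unary r (v j0))
    (hθl : ∀ (j : ZMod ℓ) (h : n0 < (v j).1.length) (r : L2),
      ((v j).1.get ⟨n0, h⟩).1.rel r 0 0 ↔ (Gstr K).rel r (v j0) (v j0))
    (p q : {j : ZMod ℓ // (v j).1.length ≠ n0})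
    (h : (v p.1).1.length < (v q.1).1.length) (hG : GTri K (v p.1) (v q.1) h) :
    ∃ f : Set.range (![none, some p, some q] :
        Fin 3 → Option {j : ZMod ℓ // (v j).1.length ≠ n0}) → WK,
      ((gammaStr K v n0 j0 hlt).Induced (Set.range _)).IsEmb K f := by
  obtain ⟨D, ⟨hA, hB, hC⟩, f, hf⟩ := hG n0 (hlt p)
  have hpq : p ≠ q := by
    intro he
    rw [he] at h
    omega
  have hwp : HasWit (v p.1) := Or.inl ⟨v q.1, h, hG⟩
  have hwq : HasWit (v q.1) := Or.inr ⟨v p.1, h, hG⟩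
  refine emb_of_tri_emb ?_ ?_ ?_ hf
  · intro i j hij
    fin_cases i <;> fin_cases j <;> simp_all
  · intro r i
    fin_cases i
    · exact ((hθu p.1 (hlt p) r).symm).trans (hA.2.1 r 0)
    · exact ((g_unary_iff hwp (gvert_pos _) r).trans
        (((v p.1).2.2 0 n0 (gvert_pos _) (hlt p)).1 r)).trans (hA.2.1 r 1)
    · exact ((g_unary_iff hwq (gvert_pos _) r).trans
        (((v q.1).2.2 0 n0 (gvert_pos _) (hlt q)).1 r)).trans (hC.2.1 r 1)
  · intro r i j
    fin_cases i <;> fin_cases j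
    · exact ((hθl p.1 (hlt p) r).symm).trans (hA.2.2 r 0 0)
    · exact hA.2.2 r 0 1
    · exact hC.2.2 r 0 1
    · exact hA.2.2 r 1 0
    · exact ((g_loop_iff hwp (gvert_pos _) r).trans
        (((v p.1).2.2 0 n0 (gvert_pos _) (hlt p)).2 r)).trans (hA.2.2 r 1 1)
    · exact (g_rel_iff_UV h hG r).trans (hB.2.2 r 0 1)
    · exact hC.2.2 r 1 0
    · exact (g_rel_iff_VU h hG r).trans (hB.2.2 r 1 0)
    · exact ((g_loop_iff hwq (gvert_pos _) r).trans
        (((v q.1).2.2 0 n0 (gvert_pos _) (hlt q)).2 r)).trans (hC.2.2 r 1 1)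

end GammaDef

section Cycles

variable {L1 L2 WK : Type}

theorem g_cycles [Finite L1] [Finite L2] [Infinite WK]
    {K : Str L1 L2 WK} (hK : K.Irred) (hyp : CompletionHyp K) :
    (Gstr K).CycleCompletes K := by
  classical
  intro ℓ v hv
  obtain ⟨⟨hl3, hvinj, hvadj⟩, hvind⟩ := hv
  haveI : NeZero ℓ := ⟨by omega⟩
  set lenv : ZMod ℓ → ℕ := fun j => (v j).1.length with hlenv
  obtain ⟨j0, -, hj0min⟩ := Finset.exists_min_image Finset.univ lenv ⟨0, Finset.mem_univ 0⟩
  set n0 := lenv j0 with hn0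
  have hmin : ∀ j, n0 ≤ lenv j := fun j => hj0min j (Finset.mem_univ j)
  have hlt : ∀ j : {j : ZMod ℓ // (v j).1.length ≠ n0}, n0 < (v j.1).1.length :=
    fun j => lt_of_le_of_ne (hmin j.1) (Ne.symm j.2)
  have hconsec : ∀ a b : ZMod ℓ, (Gstr K).Adj (v a) (v b) → b = a + 1 ∨ a = b + 1 := by
    intro a b hadj
    by_contra hne
    push_neg at hne
    have hab : a ≠ b := fun he => hadj.1 (congrArg v he)
    exact hvind a b hab hne.1 hne.2 hadj
  have hsub1 : ∀ a : ZMod ℓ, a - 1 + 1 = a := fun a => sub_add_cancel a 1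
  have hadjp : ∀ a : ZMod ℓ, (Gstr K).Adj (v (a - 1)) (v a) := by
    intro a
    have := hvadj (a - 1)
    rwa [hsub1 a] at this
  have hlen_ne : ∀ a : ZMod ℓ, lenv a ≠ lenv (a + 1) := fun a => g_adj_len_ne (hvadj a)
  have hnbr1 : ∀ a : ZMod ℓ, lenv a = n0 → lenv (a + 1) ≠ n0 :=
    fun a h he => hlen_ne a (h.trans he.symm)
  have hnbr2 : ∀ a : ZMod ℓ, lenv a = n0 → lenv (a - 1) ≠ n0 :=
    fun a h he => (g_adj_len_ne (hadjp a)) (he.trans h.symm)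
  -- the invariant data θ and its constancy around the cycle
  set θu : ZMod ℓ → L1 → Prop := fun j r =>
    if h : n0 < lenv j then ((v j).1.get ⟨n0, h⟩).1.unary r 0 else (Gstr K).unary r (v j)
    with hθu
  set θl : ZMod ℓ → L2 → Prop := fun j r =>
    if h : n0 < lenv j then ((v j).1.get ⟨n0, h⟩).1.rel r 0 0 else (Gstr K).rel r (v j) (v j)
    with hθl
  have hstep : ∀ a : ZMod ℓ, (∀ r, θu a r ↔ θu (a+1) r) ∧ (∀ r, θl a r ↔ θl (a+1) r) := by
    intro a
    rcases g_adj_extract (hvadj a) with ⟨h, hG⟩ | ⟨h, hG⟩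
    · have hq : n0 < lenv (a+1) := lt_of_le_of_lt (hmin a) h
      by_cases hp : n0 < lenv a
      · have hcons := gtri_consist hG (i := n0) hp
        constructor <;> intro r <;> simp only [hθu, hθl] <;> rw [dif_pos hp, dif_pos hq]
        · exact (hcons.2.2.1 r).symm
        · exact (hcons.2.2.2 r).symm
      · have hp' : lenv a = n0 := le_antisymm (not_lt.1 hp) (hmin a)
        have hfe : (⟨(v a).1.length, h⟩ : Fin (v (a+1)).1.length) = ⟨n0, hq⟩ := Fin.ext hp'
        constructor <;> intro r <;> simp only [hθu, hθl] <;> rw [dif_neg hp, dif_pos hq]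
        · have h1 := g_unary_iff_U h hG r
          rwa [hfe] at h1
        · have h1 := g_loop_iff_U h hG r
          rwa [hfe] at h1
    · have hq : n0 < lenv a := lt_of_le_of_lt (hmin (a+1)) h
      by_cases hp : n0 < lenv (a+1)
      · have hcons := gtri_consist hG (i := n0) hp
        constructor <;> intro r <;> simp only [hθu, hθl] <;> rw [dif_pos hq, dif_pos hp]
        · exact hcons.2.2.1 r
        · exact hcons.2.2.2 r
      · have hp' : lenv (a+1) = n0 := le_antisymm (not_lt.1 hp) (hmin (a+1))
        have hfe : (⟨(v (a+1)).1.length, h⟩ : Fin (v a).1.length) = ⟨n0, hq⟩ := Fin.ext hp'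
        constructor <;> intro r <;> simp only [hθu, hθl] <;> rw [dif_pos hq, dif_neg hp]
        · have h1 := g_unary_iff_U h hG r
          rw [hfe] at h1
          exact h1.symm
        · have h1 := g_loop_iff_U h hG r
          rw [hfe] at h1
          exact h1.symm
  have hθall : ∀ j, (∀ r, θu j r ↔ θu j0 r) ∧ (∀ r, θl j r ↔ θl j0 r) := by
    have hk : ∀ k : ℕ, (∀ r, θu (j0 + (k : ZMod ℓ)) r ↔ θu j0 r) ∧
        (∀ r, θl (j0 + (k : ZMod ℓ)) r ↔ θl j0 r) := by
      intro k
      induction k with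
      | zero =>
        constructor <;> intro r <;> rw [Nat.cast_zero, add_zero]
      | succ n ih =>
        have hs := hstep (j0 + (n : ZMod ℓ))
        have hc : (j0 + ((n + 1 : ℕ) : ZMod ℓ)) = (j0 + (n : ZMod ℓ)) + 1 := by
          push_cast
          ring
        rw [hc]
        exact ⟨fun r => (hs.1 r).symm.trans (ih.1 r), fun r => (hs.2 r).symm.trans (ih.2 r)⟩
    intro j
    have hj : j0 + (((j - j0).val : ℕ) : ZMod ℓ) = j := by
      rw [ZMod.natCast_rightInverse (j - j0)]
      ring
    have := hk (j - j0).val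
    rwa [hj] at this
  have hθu' : ∀ (j : ZMod ℓ) (h : n0 < (v j).1.length) (r : L1),
      ((v j).1.get ⟨n0, h⟩).1.unary r 0 ↔ (Gstr K).unary r (v j0) := by
    intro j h r
    have h1 := (hθall j).1 r
    simp only [hθu] at h1
    rw [dif_pos h, dif_neg (lt_irrefl n0)] at h1
    exact h1
  have hθl' : ∀ (j : ZMod ℓ) (h : n0 < (v j).1.length) (r : L2),
      ((v j).1.get ⟨n0, h⟩).1.rel r 0 0 ↔ (Gstr K).rel r (v j0) (v j0) := by
    intro j h r
    have h1 := (hθall j).2 r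
    simp only [hθl] at h1
    rw [dif_pos h, dif_neg (lt_irrefl n0)] at h1
    exact h1
  have hθmin : ∀ j, lenv j = n0 →
      (∀ r, (Gstr K).unary r (v j) ↔ (Gstr K).unary r (v j0)) ∧
      (∀ r, (Gstr K).rel r (v j) (v j) ↔ (Gstr K).rel r (v j0) (v j0)) := by
    intro j hj
    have hnot : ¬ n0 < lenv j := by omega
    constructor <;> intro r
    · have h1 := (hθall j).1 r
      simp only [hθu] at h1
      rw [dif_neg hnot, dif_neg (lt_irrefl n0)] at h1
      exact h1
    · have h1 := (hθall j).2 r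
      simp only [hθl] at h1
      rw [dif_neg hnot, dif_neg (lt_irrefl n0)] at h1
      exact h1
  -- the structure Γ and its completion
  set Γ := gammaStr K v n0 j0 hlt with hΓdef
  have hadj_none : ∀ j, Γ.Adj none (some j) := by
    intro j
    obtain ⟨r, hr⟩ := sig_cross hK ((v j.1).1.get ⟨n0, hlt j⟩)
    exact ⟨by simp, r, hr⟩
  have hbase : ∀ j, PairEmbData Γ K none (some j) := by
    intro j
    obtain ⟨g, hg⟩ := ((v j.1).1.get ⟨n0, hlt j⟩).2
    have hwj : HasWit (v j.1) := exists_wit hK hyp (v j.1)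
    have hA1 := (v j.1).2.2 0 n0 (gvert_pos _) (hlt j)
    refine ⟨g, fun he => absurd (hg.1 he) (by decide), ?_, ?_, ?_, ?_, ?_, ?_⟩
    · exact fun r => (hθu' j.1 (hlt j) r).symm.trans (hg.2.1 r 0)
    · exact fun r => ((g_unary_iff hwj (gvert_pos _) r).trans (hA1.1 r)).trans (hg.2.1 r 1)
    · exact fun r => (hθl' j.1 (hlt j) r).symm.trans (hg.2.2 r 0 0)
    · exact fun r => ((g_loop_iff hwj (gvert_pos _) r).trans (hA1.2 r)).trans (hg.2.2 r 1 1)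
    · exact fun r => hg.2.2 r 0 1
    · exact fun r => hg.2.2 r 1 0
  have hγsmall : Γ.SmallIrredEmbed K 2 := by
    refine smallIrred_build ?_ ?_
    · intro a
      match a with
      | none => exact g_single_data hK hyp (v j0)
      | some j => exact g_single_data hK hyp (v j.1)
    · intro a b hne hadj
      match a, b with
      | none, none => exact absurd rfl hne
      | none, some j => exact hbase j
      | some j, none => exact (hbase j).symm
      | some j, some j' =>
        have hvne : v j.1 ≠ v j'.1 := fun he =>
          hne (congrArg some (Subtype.ext (hvinj he)))
        have hgadj : (Gstr K).Adj (v j.1) (v j'.1) := ⟨hvne, hadj.2⟩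
        rcases g_adj_extract hgadj with ⟨h, hG⟩ | ⟨h, hG⟩
        · exact g_pair_data h hG
        · exact (g_pair_data h hG).symm
  have hγcyc : Γ.CycleCompletes K := by
    intro ℓ' w hw
    have hl3'' : 3 ≤ ℓ' := hw.1.1
    haveI : NeZero ℓ' := ⟨by omega⟩
    by_cases hnone : ∃ i, w i = none
    · obtain ⟨i, hi⟩ := hnone
      have h3 : ℓ' = 3 := by
        by_contra h3
        have hl4 : 4 ≤ ℓ' := by have := hw.1.1; omega
        have h2ne : w (i + 1 + 1) ≠ none := by
          intro he
          have he2 := hw.1.2.1 (he.trans hi.symm)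
          refine zmod_shift_ne hw.1.1 i 2 (by omega) (by omega) ?_
          push_cast
          linear_combination he2
        obtain ⟨j2, hj2⟩ := Option.ne_none_iff_exists'.1 h2ne
        refine hw.2 i (i+1+1) ?_ ?_ ?_ ?_
        · intro he
          refine zmod_shift_ne hw.1.1 i 2 (by omega) (by omega) ?_
          push_cast
          linear_combination he.symm
        · intro he
          refine zmod_shift_ne hw.1.1 (i+1) 1 (by omega) (by omega) ?_
          push_cast
          linear_combination he
        · intro he
          refine zmod_shift_ne hw.1.1 i 3 (by omega) (by omega) ?_
          push_cast
          linear_combination he.symm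
        · rw [hi, hj2]
          exact hadj_none j2
      subst h3
      have hz3 : ∀ z : ZMod 3, z = 0 ∨ z = 1 ∨ z = 2 := by decide
      have h1ne : w (i+1) ≠ none := by
        intro he
        have he2 := hw.1.2.1 (he.trans hi.symm)
        refine zmod_shift_ne hw.1.1 i 1 (by omega) (by omega) ?_
        push_cast
        linear_combination he2
      have h2ne : w (i+1+1) ≠ none := by
        intro he
        have he2 := hw.1.2.1 (he.trans hi.symm)
        refine zmod_shift_ne hw.1.1 i 2 (by omega) (by omega) ?_
        push_cast
        linear_combination he2
      obtain ⟨ja, hja⟩ := Option.ne_none_iff_exists'.1 h1ne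
      obtain ⟨jb, hjb⟩ := Option.ne_none_iff_exists'.1 h2ne
      have hadj12 : Γ.Adj (some ja) (some jb) := by
        rw [← hja, ← hjb]
        exact hw.1.2.2 (i+1)
      have hvne : v ja.1 ≠ v jb.1 := fun he =>
        hadj12.1 (congrArg some (Subtype.ext (hvinj he)))
      have hgadj : (Gstr K).Adj (v ja.1) (v jb.1) := ⟨hvne, hadj12.2⟩
      have hrange : Set.range w = ({none, some ja, some jb} : Set _) := by
        have hall : ∀ t : ZMod 3, w t = w i ∨ w t = w (i+1) ∨ w t = w (i+1+1) := by
          intro t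
          rcases hz3 (t - i) with he | he | he
          · left; congr 1; linear_combination he
          · right; left; congr 1; linear_combination he
          · right; right; congr 1; linear_combination he
        ext x
        simp only [Set.mem_range, Set.mem_insert_iff, Set.mem_singleton_iff]
        constructor
        · rintro ⟨t, rfl⟩
          rcases hall t with he | he | he <;> rw [he]
          · rw [hi]; exact Or.inl rfl
          · rw [hja]; exact Or.inr (Or.inl rfl)
          · rw [hjb]; exact Or.inr (Or.inr rfl)
        · rintro (rfl | rfl | rfl)
          · exact ⟨i, hi⟩
          · exact ⟨i+1, hja⟩
          · exact ⟨i+1+1, hjb⟩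
      rw [hrange]
      rcases g_adj_extract hgadj with ⟨h, hG⟩ | ⟨h, hG⟩
      · have hT := gamma_tri_emb (hlt := hlt) hθu' hθl' ja jb h hG
        rw [range_fin3] at hT
        obtain ⟨f, hf⟩ := hT
        exact ⟨f, completion_of_emb hK hf⟩
      · have hT := gamma_tri_emb (hlt := hlt) hθu' hθl' jb ja h hG
        rw [range_fin3] at hT
        obtain ⟨f, hf⟩ := hT
        rw [show ({none, some ja, some jb} : Set _) = {none, some jb, some ja} from by
          rw [Set.pair_comm]]
        exact ⟨f, completion_of_emb hK hf⟩
    · exfalso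
      have hl3' : 3 ≤ ℓ' := hw.1.1
      push_neg at hnone
      have hsome : ∀ t, ∃ j, w t = some j := fun t => Option.ne_none_iff_exists'.1 (hnone t)
      choose jf hjf using hsome
      have hstep' : ∀ t : ZMod ℓ', (jf (t+1)).1 = (jf t).1 + 1 ∨ (jf t).1 = (jf (t+1)).1 + 1 := by
        intro t
        have hadj := hw.1.2.2 t
        rw [hjf t, hjf (t+1)] at hadj
        have hvne : v (jf t).1 ≠ v (jf (t+1)).1 := fun he =>
          hadj.1 (congrArg some (Subtype.ext (hvinj he)))
        exact hconsec _ _ ⟨hvne, hadj.2⟩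
      set P : ZMod ℓ' → ℕ := fun t => ((jf t).1 - j0).val with hP
      have hPne : ∀ t, (jf t).1 - j0 ≠ 0 := by
        intro t he
        have he2 : (jf t).1 = j0 := by linear_combination he
        exact (jf t).2 (by rw [he2])
      have hPstep : ∀ t, P (t+1) = P t + 1 ∨ P t = P (t+1) + 1 := by
        intro t
        rcases hstep' t with he | he
        · left
          have he2 : (jf (t+1)).1 - j0 = ((jf t).1 - j0) + 1 := by rw [he]; ring
          show ((jf (t+1)).1 - j0).val = _
          rw [he2]
          exact zmod_val_succ (by rw [← he2]; exact hPne (t+1))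
        · right
          have he2 : (jf t).1 - j0 = ((jf (t+1)).1 - j0) + 1 := by rw [he]; ring
          show ((jf t).1 - j0).val = _
          rw [he2]
          exact zmod_val_succ (by rw [← he2]; exact hPne t)
      obtain ⟨t0, -, hmax⟩ := Finset.exists_max_image Finset.univ P ⟨0, Finset.mem_univ 0⟩
      have hsub1' : t0 - 1 + 1 = t0 := sub_add_cancel t0 1
      have h1 : P t0 = P (t0 - 1) + 1 := by
        rcases hPstep (t0 - 1) with he | he
        · rw [hsub1'] at he
          exact he
        · rw [hsub1'] at he
          have := hmax (t0 - 1) (Finset.mem_univ _)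
          omega
      have h2 : P t0 = P (t0 + 1) + 1 := by
        rcases hPstep t0 with he | he
        · have := hmax (t0 + 1) (Finset.mem_univ _)
          omega
        · exact he
      have hPeq : P (t0 - 1) = P (t0 + 1) := by omega
      have hjeq : (jf (t0 - 1)).1 = (jf (t0 + 1)).1 := by
        have e1 : ((jf (t0-1)).1 - j0 : ZMod ℓ) = (jf (t0+1)).1 - j0 := by
          have e2 := congrArg (fun n : ℕ => (n : ZMod ℓ)) hPeq
          simp only [hP] at e2
          rwa [ZMod.natCast_rightInverse _, ZMod.natCast_rightInverse _] at e2
        linear_combination e1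
      have hweq : w (t0 - 1) = w (t0 + 1) := by
        rw [hjf (t0 - 1), hjf (t0 + 1), Subtype.ext hjeq]
      have he2 := hw.1.2.1 hweq
      refine zmod_shift_ne hw.1.1 (t0 - 1) 2 (by omega) (by omega) ?_
      push_cast
      linear_combination he2.symm
  obtain ⟨cΓ, -, hΓinj, hΓhom, hΓirr⟩ := hyp _ Γ hγcyc hγsmall
  -- the point assignment and its exactness
  set pt : ZMod ℓ → WK := fun j => if h : lenv j ≠ n0 then cΓ (some ⟨j, h⟩) else cΓ none
    with hptdef
  have hptsingle : ∀ j, (∀ r, (Gstr K).unary r (v j) ↔ K.unary r (pt j)) ∧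
      (∀ r, (Gstr K).rel r (v j) (v j) ↔ K.rel r (pt j) (pt j)) := by
    intro j
    by_cases h : lenv j ≠ n0
    · have hE := single_extract (hΓirr {some ⟨j, h⟩} (irred_singleton Γ _))
      simp only [hptdef]
      rw [dif_pos h]
      exact hE
    · have hE := single_extract (hΓirr {(none : Option _)} (irred_singleton Γ _))
      push_neg at h
      have hm := hθmin j h
      simp only [hptdef]
      rw [dif_neg (fun hne => hne h)]
      exact ⟨fun r => (hm.1 r).trans (hE.1 r), fun r => (hm.2 r).trans (hE.2 r)⟩
  have hptne : ∀ a b : ZMod ℓ, a ≠ b → (lenv a ≠ n0 ∨ lenv b ≠ n0) → pt a ≠ pt b := by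
    intro a b hab hor
    simp only [hptdef]
    by_cases ha : lenv a ≠ n0 <;> by_cases hb : lenv b ≠ n0
    · rw [dif_pos ha, dif_pos hb]
      intro he
      have h2 := hΓinj he
      simp only [Option.some.injEq, Subtype.mk.injEq] at h2
      exact hab h2
    · rw [dif_pos ha, dif_neg hb]
      intro he
      simpa using hΓinj he
    · rw [dif_neg ha, dif_pos hb]
      intro he
      simpa using hΓinj he
    · rcases hor with h | h
      · exact absurd h ha
      · exact absurd h hb
  have hptedge : ∀ a : ZMod ℓ,
      (∀ r, (Gstr K).rel r (v a) (v (a+1)) ↔ K.rel r (pt a) (pt (a+1))) ∧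
      (∀ r, (Gstr K).rel r (v (a+1)) (v a) ↔ K.rel r (pt (a+1)) (pt a)) := by
    intro a
    by_cases hp : lenv a ≠ n0
    · by_cases hq : lenv (a+1) ≠ n0
      · have hne : (some ⟨a, hp⟩ : Option {j : ZMod ℓ // (v j).1.length ≠ n0}) ≠
            some ⟨a+1, hq⟩ := by
          simp only [ne_eq, Option.some.injEq, Subtype.mk.injEq]
          intro he
          refine zmod_shift_ne hl3 a 1 (by omega) (by omega) ?_
          push_cast
          linear_combination he.symm
        have hγadj : Γ.Adj (some ⟨a, hp⟩) (some ⟨a+1, hq⟩) := ⟨hne, (hvadj a).2⟩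
        have hE := pair_extract hne (hΓirr _ (irred_pair_of_adj Γ hγadj))
        simp only [hptdef]
        rw [dif_pos hp, dif_pos hq]
        exact ⟨hE.2.2.2.2.2.1, hE.2.2.2.2.2.2⟩
      · -- a+1 is minimal
        push_neg at hq
        have hdir : ∃ h : lenv (a+1) < lenv a, GTri K (v (a+1)) (v a) h := by
          rcases g_adj_extract (hvadj a) with ⟨h, hG⟩ | ⟨h, hG⟩
          · exfalso
            have hm := hmin a
            have e1 : lenv a = (v a).1.length := rfl
            have e2 : lenv (a+1) = (v (a+1)).1.length := rfl
            omega
          · exact ⟨h, hG⟩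
        obtain ⟨h, hG⟩ := hdir
        have hne : (none : Option {j : ZMod ℓ // (v j).1.length ≠ n0}) ≠ some ⟨a, hp⟩ := by simp
        have hE := pair_extract hne (hΓirr _ (irred_pair_of_adj Γ (hadj_none ⟨a, hp⟩)))
        have hfe : (⟨(v (a+1)).1.length, h⟩ : Fin (v a).1.length) = ⟨n0, hlt ⟨a, hp⟩⟩ :=
          Fin.ext hq
        have hUV := fun r => g_rel_iff_UV h hG r
        have hVU := fun r => g_rel_iff_VU h hG r
        simp only [hfe] at hUV hVU
        simp only [hptdef]
        rw [dif_pos hp, dif_neg (fun hne' => hne' hq)]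
        constructor
        · intro r
          exact (hVU r).trans (hE.2.2.2.2.2.2 r)
        · intro r
          exact (hUV r).trans (hE.2.2.2.2.2.1 r)
    · -- a is minimal
      push_neg at hp
      have hq : lenv (a+1) ≠ n0 := hnbr1 a hp
      have hdir : ∃ h : lenv a < lenv (a+1), GTri K (v a) (v (a+1)) h := by
        rcases g_adj_extract (hvadj a) with ⟨h, hG⟩ | ⟨h, hG⟩
        · exact ⟨h, hG⟩
        · exfalso
          have hm := hmin (a+1)
          have e1 : lenv a = (v a).1.length := rfl
          have e2 : lenv (a+1) = (v (a+1)).1.length := rfl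
          omega
      obtain ⟨h, hG⟩ := hdir
      have hne : (none : Option {j : ZMod ℓ // (v j).1.length ≠ n0}) ≠ some ⟨a+1, hq⟩ := by simp
      have hE := pair_extract hne (hΓirr _ (irred_pair_of_adj Γ (hadj_none ⟨a+1, hq⟩)))
      have hfe : (⟨(v a).1.length, h⟩ : Fin (v (a+1)).1.length) = ⟨n0, hlt ⟨a+1, hq⟩⟩ :=
        Fin.ext hp
      have hUV := fun r => g_rel_iff_UV h hG r
      have hVU := fun r => g_rel_iff_VU h hG r
      simp only [hfe] at hUV hVU
      simp only [hptdef]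
      rw [dif_neg (fun hne' => hne' hp), dif_pos hq]
      constructor
      · intro r
        exact (hUV r).trans (hE.2.2.2.2.2.1 r)
      · intro r
        exact (hVU r).trans (hE.2.2.2.2.2.2 r)
  -- the final auxiliary structure on the vertex set of the cycle
  set ind : ↥(Set.range v) → ZMod ℓ := fun x => Classical.choose x.2 with hinddef
  have hindv : ∀ x : ↥(Set.range v), v (ind x) = x.1 := fun x => Classical.choose_spec x.2
  have hxy_ind : ∀ x y : ↥(Set.range v), ind x = ind y → x = y := by
    intro x y h
    refine Subtype.ext ?_
    rw [← hindv x, ← hindv y, h]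
  set side : ↥(Set.range v) → ↥(Set.range v) → Prop := fun x y =>
    x ≠ y ∧ (ind y = ind x + 1 ∨ ind x = ind y + 1 ∨
      (lenv (ind x) ≠ n0 ∧ lenv (ind y) ≠ n0)) with hsidedef
  set vm : ↥(Set.range v) → WK := fun x => pt (ind x) with hvmdef
  have hsym : ∀ x y, side x y → side y x := by
    rintro x y ⟨h1, h2⟩
    exact ⟨h1.symm, by tauto⟩
  have hsideinj : ∀ x y, side x y → vm x ≠ vm y := by
    rintro x y ⟨hne, hcase⟩
    have hindne : ind x ≠ ind y := fun he => hne (hxy_ind x y he)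
    rcases hcase with he | he | ⟨hpx, hpy⟩
    · refine hptne _ _ hindne ?_
      by_cases hx : lenv (ind x) ≠ n0
      · exact Or.inl hx
      · push_neg at hx
        refine Or.inr ?_
        rw [he]
        exact hnbr1 _ hx
    · refine hptne _ _ hindne ?_
      by_cases hy : lenv (ind y) ≠ n0
      · exact Or.inr hy
      · push_neg at hy
        refine Or.inl ?_
        rw [he]
        exact hnbr1 _ hy
    · exact hptne _ _ hindne (Or.inl hpx)
  have hside_of_adj : ∀ (ℓ' : ℕ) (w : ZMod ℓ' → ↥(Set.range v)),
      (∀ t, (relStr K vm side).Adj (w t) (w (t+1))) → ∀ t, side (w t) (w (t+1)) := by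
    intro ℓ' w hadj t
    obtain ⟨hne, r, hr | hr⟩ := hadj t
    · exact hr.2.resolve_left hne
    · exact hsym _ _ (hr.2.resolve_left (Ne.symm hne))
  have hthree : ∀ (ℓ' : ℕ) (w : ZMod ℓ' → ↥(Set.range v)),
      (relStr K vm side).IsInducedCycle ℓ' w → ℓ' = 3 := by
    intro ℓ' w hw
    have hl3' : 3 ≤ ℓ' := hw.1.1
    haveI : NeZero ℓ' := ⟨by omega⟩
    by_contra h3
    have hl4 : 4 ≤ ℓ' := by have := hw.1.1; omega
    have hAside := hside_of_adj ℓ' w hw.1.2.2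
    -- a chord between two nonminimal vertices at distance two
    have hchord : ∀ x y : ↥(Set.range v), x ≠ y → lenv (ind x) ≠ n0 → lenv (ind y) ≠ n0 →
        (relStr K vm side).Adj x y := by
      intro x y hne hx hy
      have hs : side x y := ⟨hne, Or.inr (Or.inr ⟨hx, hy⟩)⟩
      obtain ⟨-, r, hr⟩ := hK (vm x) (vm y) (hsideinj _ _ hs)
      rcases hr with hr | hr
      · exact ⟨hne, r, Or.inl ⟨hr, Or.inr hs⟩⟩
      · exact ⟨hne, r, Or.inr ⟨hr, Or.inr (hsym _ _ hs)⟩⟩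
    by_cases hmin3 : ∃ t, lenv (ind (w t)) = n0
    · obtain ⟨t, ht⟩ := hmin3
      have hminadj : ∀ y : ↥(Set.range v), side (w t) y → lenv (ind y) ≠ n0 := by
        rintro y ⟨-, hcase⟩
        rcases hcase with he | he | ⟨hx, -⟩
        · rw [he]
          exact hnbr1 _ ht
        · intro he2
          have : ind (w t) = ind y + 1 := he
          rw [this] at ht
          exact hnbr1 _ he2 ht
        · exact absurd ht hx
      have hb : side (w t) (w (t-1)) := by
        have := hAside (t-1)
        rw [sub_add_cancel] at this
        exact hsym _ _ this
      have ha := hAside t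
      have hwne : w (t-1) ≠ w (t+1) := by
        intro he
        have he2 := hw.1.2.1 he
        refine zmod_shift_ne hw.1.1 (t-1) 2 (by omega) (by omega) ?_
        push_cast
        linear_combination -he2
      exact h3 (induced_cycle_three hw t
        (hchord _ _ hwne (hminadj _ hb) (hminadj _ ha)))
    · push_neg at hmin3
      have hwne : w 0 ≠ w (0+1+1) := by
        intro he
        have he2 := hw.1.2.1 he
        refine zmod_shift_ne hw.1.1 0 2 (by omega) (by omega) ?_
        push_cast
        linear_combination he2.symm
      refine hw.2 0 (0+1+1) ?_ ?_ ?_ (hchord _ _ hwne (hmin3 0) (hmin3 (0+1+1)))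
      · intro he
        refine zmod_shift_ne hw.1.1 0 2 (by omega) (by omega) ?_
        push_cast
        linear_combination he.symm
      · intro he
        refine zmod_shift_ne hw.1.1 (0+1) 1 (by omega) (by omega) ?_
        push_cast
        linear_combination he
      · intro he
        refine zmod_shift_ne hw.1.1 0 3 (by omega) (by omega) ?_
        push_cast
        linear_combination he.symm
  obtain ⟨cF, -, hFinj, hFhom, hFirr⟩ := hyp _ (relStr K vm side)
    (relStr_cycles K vm side hK hsym hsideinj hthree)
    (relStr_small K vm side hsym hsideinj)
  -- transfer back to the induced structure on the cycle
  have hGunary : ∀ (x : ↥(Set.range v)) (r : L1),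
      (Gstr K).unary r x.1 ↔ K.unary r (vm x) := by
    intro x r
    have := (hptsingle (ind x)).1 r
    rwa [hindv x] at this
  have hGloop : ∀ (x : ↥(Set.range v)) (r : L2),
      (Gstr K).rel r x.1 x.1 ↔ K.rel r (vm x) (vm x) := by
    intro x r
    have := (hptsingle (ind x)).2 r
    rwa [hindv x] at this
  have hGedge : ∀ (x y : ↥(Set.range v)), x ≠ y → (Gstr K).Adj x.1 y.1 →
      (∀ r, (Gstr K).rel r x.1 y.1 ↔ (relStr K vm side).rel r x y) := by
    intro x y hne hadj
    have hadj' : (Gstr K).Adj (v (ind x)) (v (ind y)) := by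
      rw [hindv x, hindv y]
      exact hadj
    have hcons := hconsec _ _ hadj'
    have hside : side x y :=
      ⟨hne, by rcases hcons with h | h; exacts [Or.inl h, Or.inr (Or.inl h)]⟩
    intro r
    have hKiff : (Gstr K).rel r (v (ind x)) (v (ind y)) ↔
        K.rel r (pt (ind x)) (pt (ind y)) := by
      rcases hcons with h | h
      · have h2 := (hptedge (ind x)).1 r
        rw [← h] at h2
        exact h2
      · have h2 := (hptedge (ind y)).2 r
        rw [← h] at h2
        exact h2
    rw [← hindv x, ← hindv y]
    constructor
    · intro hg
      exact ⟨hKiff.1 hg, Or.inr hside⟩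
    · intro hg
      exact hKiff.2 hg.1
  refine ⟨cF, hK, hFinj, ⟨?_, ?_⟩, ?_⟩
  · intro r x hx
    exact hFhom.1 r x ((hGunary x r).1 hx)
  · intro r x y hxy
    by_cases he : x = y
    · subst he
      exact hFhom.2 r x x ⟨(hGloop x r).1 hxy, Or.inl rfl⟩
    · have hadj : (Gstr K).Adj x.1 y.1 :=
        ⟨fun h2 => he (Subtype.ext h2), r, Or.inl hxy⟩
      exact hFhom.2 r x y ((hGedge x y he hadj r).1 hxy)
  · intro S hS
    have hSadj : ∀ x y : ↥S, x ≠ y → (Gstr K).Adj x.1.1 y.1.1 := by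
      intro x y hne
      obtain ⟨-, r, hr⟩ := hS x y hne
      have hne2 : x.1.1 ≠ y.1.1 := fun h =>
        hne (Subtype.ext (Subtype.ext h))
      exact ⟨hne2, r, hr⟩
    have hSirr : ((relStr K vm side).Induced S).Irred := by
      intro x y hne
      have hadj := hSadj x y hne
      have hne1 : x.1 ≠ y.1 := fun h => hne (Subtype.ext h)
      refine ⟨hne, ?_⟩
      obtain ⟨-, r, hr | hr⟩ := hadj
      · exact ⟨r, Or.inl ((hGedge x.1 y.1 hne1 (hSadj x y hne) r).1 hr)⟩
      · exact ⟨r, Or.inr ((hGedge y.1 x.1 (Ne.symm hne1) (hSadj x y hne).symm r).1 hr)⟩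
    have hE := hFirr S hSirr
    refine ⟨hE.1, ?_, ?_⟩
    · intro r x
      exact (hGunary x.1 r).trans (hE.2.1 r x)
    · intro r x y
      by_cases he : x = y
      · subst he
        refine Iff.trans ?_ (hE.2.2 r x x)
        exact ⟨fun h => ⟨(hGloop x.1 r).1 h, Or.inl rfl⟩, fun h => (hGloop x.1 r).2 h.1⟩
      · have hne1 : x.1 ≠ y.1 := fun h => he (Subtype.ext h)
        exact (hGedge x.1 y.1 hne1 (hSadj x y he) r).trans (hE.2.2 r x y)

end Cycles

/-- There exists a completion `c : G → K`, i.e. an injective homomorphism-embedding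
from the word structure `G` into `K`. -/
theorem G_has_completion {L1 L2 WK : Type} [Finite L1] [Finite L2]
    [Countable WK] [Infinite WK]
    (K : Str L1 L2 WK) (hK : K.Irred) (hyp : CompletionHyp K) :
    ∃ c : GVert K → WK, (Gstr K).IsCompletion K c :=
  hyp (GVert K) (Gstr K) (g_cycles hK hyp) (g_small hK hyp)
end
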